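/- arXiv:2009.14500 — 5 statements merged into one kernel-verified Lean document; each statement's English description precedes it below -/
import Mathlib

section
/- For all real numbers c > 0 and α > 2, ∫₀^∞ ∫₀^∞ (1 − exp(−c (r² + t²)^{−α/2})) dt dr = (π/4) c^{2/α} Γ(1 − 2/α), where Γ is the real Gamma function. -/
open MeasureTheory Real
open Set

lemma one_sub_exp_neg_le {x : ℝ} (hx : 0 ≤ x) : 1 - Real.exp (-x) ≤ x := by
  have := Real.add_one_le_exp (-x); linarith

lemma one_sub_exp_neg_nonneg {x : ℝ} (hx : 0 ≤ x) : 0 ≤ 1 - Real.exp (-x) := by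
  have : Real.exp (-x) ≤ Real.exp 0 := Real.exp_le_exp.mpr (by linarith)
  simpa using this

lemma aux_meas (s : ℝ) : Measurable (fun x : ℝ => (1 - Real.exp (-x)) * x ^ (-s - 1)) := by
  fun_prop

lemma aux_integrableOn_one_sub_exp {s : ℝ} (hs0 : 0 < s) (hs1 : s < 1) :
    IntegrableOn (fun x : ℝ => (1 - Real.exp (-x)) * x ^ (-s - 1)) (Ioi 0) := by
  have hmeas := aux_meas s
  rw [← Ioc_union_Ioi_eq_Ioi (zero_le_one (α := ℝ)), integrableOn_union]
  constructor
  · -- on (0,1], dominate by x ^ (-s)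
    have hdom : IntegrableOn (fun x : ℝ => x ^ (-s)) (Ioc 0 1) := by
      have := intervalIntegral.intervalIntegrable_rpow' (a := 0) (b := 1) (r := -s)
        (by linarith)
      rwa [intervalIntegrable_iff_integrableOn_Ioc_of_le zero_le_one] at this
    refine Integrable.mono hdom (hmeas.aestronglyMeasurable.restrict) ?_
    filter_upwards [ae_restrict_mem measurableSet_Ioc] with x hx
    have hx0 : 0 < x := hx.1
    rw [Real.norm_eq_abs, Real.norm_eq_abs]
    have h1 : 0 ≤ x ^ (-s - 1) := Real.rpow_nonneg hx0.le _
    have h2 : 0 ≤ 1 - Real.exp (-x) := one_sub_exp_neg_nonneg hx0.le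
    rw [abs_of_nonneg (mul_nonneg h2 h1), abs_of_nonneg (Real.rpow_nonneg hx0.le _)]
    calc (1 - Real.exp (-x)) * x ^ (-s - 1) ≤ x * x ^ (-s - 1) :=
          mul_le_mul_of_nonneg_right (one_sub_exp_neg_le hx0.le) h1
      _ = x ^ (-s) := by
          rw [show x * x ^ (-s - 1) = x ^ (1 + (-s - 1)) by
            rw [Real.rpow_add hx0, Real.rpow_one]]
          norm_num
  · -- on (1,∞), dominate by x ^ (-s-1)
    have hdom : IntegrableOn (fun x : ℝ => x ^ (-s - 1)) (Ioi 1) :=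
      integrableOn_Ioi_rpow_of_lt (by linarith) one_pos
    refine Integrable.mono hdom (hmeas.aestronglyMeasurable.restrict) ?_
    filter_upwards [ae_restrict_mem measurableSet_Ioi] with x hx
    have hx0 : (0:ℝ) < x := lt_trans one_pos hx
    have h1 : 0 ≤ x ^ (-s - 1) := Real.rpow_nonneg hx0.le _
    have h2 : 0 ≤ 1 - Real.exp (-x) := one_sub_exp_neg_nonneg hx0.le
    rw [Real.norm_eq_abs, Real.norm_eq_abs, abs_of_nonneg (mul_nonneg h2 h1),
      abs_of_nonneg h1]
    have h3 : 1 - Real.exp (-x) ≤ 1 := by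
      have : 0 < Real.exp (-x) := Real.exp_pos _
      linarith
    nlinarith

lemma aux_integral_one_sub_exp {s : ℝ} (hs0 : 0 < s) (hs1 : s < 1) :
    ∫ x in Ioi (0:ℝ), (1 - Real.exp (-x)) * x ^ (-s - 1) = Real.Gamma (1 - s) / s := by
  set H : ℝ → ℝ := fun x => -((1 - Real.exp (-x)) * x ^ (-s)) / s with hH
  have hint1 := aux_integrableOn_one_sub_exp hs0 hs1
  have hint2 : IntegrableOn (fun x : ℝ => Real.exp (-x) * x ^ (-s) / s) (Ioi 0) := by
    have := (Real.GammaIntegral_convergent (s := 1 - s) (by linarith)).div_const s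
    rw [IntegrableOn]
    simpa [sub_sub_cancel_left] using this
  have key : ∫ x in Ioi (0:ℝ),
      ((1 - Real.exp (-x)) * x ^ (-s - 1) - Real.exp (-x) * x ^ (-s) / s) = 0 - H 0 := by
    refine integral_Ioi_of_hasDerivAt_of_tendsto ?_ ?_ ?_ ?_
    · -- continuity at 0 within Ici 0
      rw [ContinuousWithinAt]
      have hH0 : H 0 = 0 := by simp [hH]
      rw [hH0]
      apply squeeze_zero_norm'
      · filter_upwards [self_mem_nhdsWithin] with x (hx : x ∈ Ici (0:ℝ))
        have hx0 : (0:ℝ) ≤ x := hx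
        show ‖H x‖ ≤ x ^ (1 - s) / s
        rw [hH, Real.norm_eq_abs]
        have h1 : 0 ≤ x ^ (-s) := Real.rpow_nonneg hx0 _
        have h2 : 0 ≤ 1 - Real.exp (-x) := one_sub_exp_neg_nonneg hx0
        rw [abs_div, abs_neg, abs_of_nonneg (mul_nonneg h2 h1), abs_of_pos hs0]
        gcongr ?_ / s
        rcases eq_or_lt_of_le hx0 with h | h
        · simp [← h, Real.zero_rpow (neg_ne_zero.mpr hs0.ne'),
            Real.zero_rpow (show (1:ℝ) - s ≠ 0 from (by linarith : (0:ℝ) < 1 - s).ne')]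
        · calc (1 - Real.exp (-x)) * x ^ (-s) ≤ x * x ^ (-s) :=
              mul_le_mul_of_nonneg_right (one_sub_exp_neg_le hx0) h1
            _ = x ^ (1 - s) := by
              rw [show x * x ^ (-s) = x ^ (1 + -s) by rw [Real.rpow_add h, Real.rpow_one],
                show (1:ℝ) + -s = 1 - s by ring]
      · have hcont : ContinuousAt (fun x : ℝ => x ^ (1 - s) / s) 0 := by
          apply ContinuousAt.div_const
          exact Real.continuousAt_rpow_const 0 (1 - s) (Or.inr (by linarith))
        have := hcont.continuousWithinAt (s := Ici (0:ℝ))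
        rw [ContinuousWithinAt] at this
        simpa [Real.zero_rpow (by linarith : (1:ℝ) - s ≠ 0)] using this
    · intro x hx
      have hx0 : (0:ℝ) < x := hx
      have d1 : HasDerivAt (fun x : ℝ => 1 - Real.exp (-x)) (Real.exp (-x)) x := by
        have := ((Real.hasDerivAt_exp (-x)).comp x (hasDerivAt_neg x)).const_sub 1
        simpa using this
      have d2 : HasDerivAt (fun x : ℝ => x ^ (-s)) (-s * x ^ (-s - 1)) x :=
        Real.hasDerivAt_rpow_const (Or.inl hx0.ne')
      have := ((d1.mul d2).neg).div_const s
      refine this.congr_deriv ?_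
      field_simp
      ring
    · exact hint1.sub hint2
    · -- limit at infinity
      have h1 : Filter.Tendsto (fun x : ℝ => 1 - Real.exp (-x)) Filter.atTop (nhds 1) := by
        have : Filter.Tendsto (fun x : ℝ => Real.exp (-x)) Filter.atTop (nhds 0) :=
          Real.tendsto_exp_neg_atTop_nhds_zero
        simpa using this.const_sub 1
      have h2 : Filter.Tendsto (fun x : ℝ => x ^ (-s)) Filter.atTop (nhds 0) :=
        tendsto_rpow_neg_atTop hs0
      have := ((h1.mul h2).neg).div_const s
      simpa [hH] using this
  have hH0 : H 0 = 0 := by simp [hH]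
  rw [hH0, sub_zero, integral_sub hint1 hint2] at key
  have hgamma : ∫ x in Ioi (0:ℝ), Real.exp (-x) * x ^ (-s) / s = Real.Gamma (1 - s) / s := by
    rw [integral_div, Real.Gamma_eq_integral (by linarith : (0:ℝ) < 1 - s)]
    norm_num
  rw [hgamma] at key
  linarith

lemma aux_scaled {s c : ℝ} (hc : 0 < c) (hs0 : 0 < s) (hs1 : s < 1) :
    ∫ y in Ioi (0:ℝ), (1 - Real.exp (-(c * y))) * y ^ (-s - 1)
      = c ^ s * (Real.Gamma (1 - s) / s) := by
  set g : ℝ → ℝ := fun u => (1 - Real.exp (-u)) * (c⁻¹ * u) ^ (-s - 1) with hg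
  have h1 := integral_comp_mul_left_Ioi g 0 hc
  have h2 : ∀ y : ℝ, g (c * y) = (1 - Real.exp (-(c * y))) * y ^ (-s - 1) := by
    intro y; rw [hg]; simp [inv_mul_cancel_left₀ hc.ne']
  simp only [h2, mul_zero] at h1
  have h3 : ∫ u in Ioi (0:ℝ), g u
      = ∫ u in Ioi (0:ℝ), ((1 - Real.exp (-u)) * u ^ (-s - 1)) * c ^ (s + 1) := by
    refine setIntegral_congr_fun measurableSet_Ioi fun u hu => ?_
    have hu0 : (0:ℝ) < u := hu
    simp only [hg]
    have : (c⁻¹ * u) ^ (-s - 1) = c⁻¹ ^ (-s - 1) * u ^ (-s - 1) :=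
      Real.mul_rpow (inv_nonneg.mpr hc.le) hu0.le
    rw [this, Real.inv_rpow hc.le,
      show (-s - 1 : ℝ) = -(s+1) by ring, Real.rpow_neg hc.le, inv_inv]
    ring
  rw [h1, h3, integral_mul_const, aux_integral_one_sub_exp hs0 hs1, smul_eq_mul]
  rw [show c ^ (s+1) = c ^ s * c by rw [Real.rpow_add hc, Real.rpow_one]]
  field_simp

lemma aux_J {c α : ℝ} (hc : 0 < c) (hα : 2 < α) :
    ∫ x in Ioi (0:ℝ), (1 - Real.exp (-(c * x ^ (-(α / 2)))))
      = c ^ (2 / α) * Real.Gamma (1 - 2 / α) := by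
  have hα0 : (0:ℝ) < α := by linarith
  set s : ℝ := 2 / α with hs
  have hs0 : 0 < s := by positivity
  have hs1 : s < 1 := by rw [hs, div_lt_one hα0]; linarith
  set p : ℝ := -(α / 2) with hp
  have hpne : p ≠ 0 := by rw [hp]; intro h; have : α / 2 = 0 := by linarith [neg_eq_zero.mp h]
                          linarith
  have habs : |p| = α / 2 := by rw [hp, abs_neg, abs_of_pos (by linarith)]
  have key := integral_comp_rpow_Ioi
    (fun y => (1 - Real.exp (-(c * y))) * y ^ (-s - 1) * (2 / α)) hpne
  have hEq : ∀ x ∈ Ioi (0:ℝ),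
      (|p| * x ^ (p - 1)) • ((1 - Real.exp (-(c * x ^ p))) * (x ^ p) ^ (-s - 1) * (2 / α))
        = (1 - Real.exp (-(c * x ^ p))) := by
    intro x hx
    have hx0 : (0:ℝ) < x := hx
    have hxp : (x ^ p) ^ (-s - 1) = x ^ (p * (-s - 1)) := by
      rw [← Real.rpow_mul hx0.le]
    have hcomb : x ^ (p - 1) * x ^ (p * (-s - 1)) = 1 := by
      rw [← Real.rpow_add hx0]
      have : p - 1 + p * (-s - 1) = 0 := by
        rw [hp, hs]; field_simp; ring
      rw [this, Real.rpow_zero]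
    have hαα : α / 2 * (2 / α) = 1 := by field_simp
    rw [smul_eq_mul, habs, hxp]
    calc α / 2 * x ^ (p - 1) * ((1 - Real.exp (-(c * x ^ p))) * x ^ (p * (-s - 1)) * (2 / α))
        = (1 - Real.exp (-(c * x ^ p))) * (x ^ (p - 1) * x ^ (p * (-s - 1))) * (α / 2 * (2 / α)) :=
          by ring
      _ = 1 - Real.exp (-(c * x ^ p)) := by rw [hcomb, hαα, mul_one, mul_one]
  rw [setIntegral_congr_fun measurableSet_Ioi hEq] at key
  rw [key, integral_mul_const, aux_scaled hc hs0 hs1]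
  rw [show c ^ s * (Real.Gamma (1 - s) / s) * (2 / α) = c ^ s * Real.Gamma (1 - s) * (2 / α / s)
    by ring, hs]
  field_simp

lemma aux_sq_rpow {ρ : ℝ} (hρ : 0 < ρ) (q : ℝ) : ((ρ ^ 2 : ℝ)) ^ q = ρ ^ (2 * q) := by
  rw [← Real.rpow_natCast ρ 2, ← Real.rpow_mul hρ.le]
  norm_num

lemma aux_f_nonneg {c α : ℝ} (hc : 0 < c) {x : ℝ} (hx : 0 ≤ x) :
    0 ≤ 1 - Real.exp (-(c * x ^ (-(α / 2)))) :=
  one_sub_exp_neg_nonneg (by positivity)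

lemma aux_f_le_one {c α : ℝ} (x : ℝ) : 1 - Real.exp (-(c * x ^ (-(α / 2)))) ≤ 1 := by
  have := Real.exp_pos (-(c * x ^ (-(α / 2)))); linarith

lemma aux_radial_meas {c α : ℝ} :
    Measurable (fun ρ : ℝ => ρ * (1 - Real.exp (-(c * (ρ ^ 2 : ℝ) ^ (-(α / 2)))))) := by
  fun_prop

lemma aux_radial_integrableOn {c α : ℝ} (hc : 0 < c) (hα : 2 < α) :
    IntegrableOn (fun ρ : ℝ => ρ * (1 - Real.exp (-(c * (ρ ^ 2 : ℝ) ^ (-(α / 2)))))) (Ioi 0) := by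
  have hmeas := aux_radial_meas (c := c) (α := α)
  rw [← Ioc_union_Ioi_eq_Ioi (zero_le_one (α := ℝ)), integrableOn_union]
  constructor
  · refine Integrable.mono ((integrableOn_const_iff (C := (1:ℝ))).mpr (Or.inr measure_Ioc_lt_top))
      hmeas.aestronglyMeasurable.restrict ?_
    filter_upwards [ae_restrict_mem measurableSet_Ioc] with ρ hρ
    have h1 : 0 ≤ 1 - Real.exp (-(c * (ρ ^ 2 : ℝ) ^ (-(α / 2)))) := aux_f_nonneg hc (by positivity)
    have h2 : 1 - Real.exp (-(c * (ρ ^ 2 : ℝ) ^ (-(α / 2)))) ≤ 1 := aux_f_le_one _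
    rw [Real.norm_eq_abs, abs_of_nonneg (mul_nonneg hρ.1.le h1), Real.norm_eq_abs]
    calc ρ * (1 - Real.exp (-(c * (ρ ^ 2 : ℝ) ^ (-(α / 2))))) ≤ 1 * 1 :=
        mul_le_mul hρ.2 h2 h1 zero_le_one
      _ ≤ |(1:ℝ)| := by norm_num
  · have hdom : IntegrableOn (fun ρ : ℝ => c * ρ ^ (1 - α)) (Ioi 1) :=
      (integrableOn_Ioi_rpow_of_lt (by linarith) one_pos).const_mul c
    refine Integrable.mono hdom hmeas.aestronglyMeasurable.restrict ?_
    filter_upwards [ae_restrict_mem measurableSet_Ioi] with ρ hρ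
    have hρ0 : (0:ℝ) < ρ := lt_trans one_pos hρ
    have h1 : 0 ≤ 1 - Real.exp (-(c * (ρ ^ 2 : ℝ) ^ (-(α / 2)))) := aux_f_nonneg hc (by positivity)
    rw [Real.norm_eq_abs, abs_of_nonneg (mul_nonneg hρ0.le h1), Real.norm_eq_abs,
      abs_of_nonneg (by positivity : (0:ℝ) ≤ c * ρ ^ (1 - α))]
    have hle : 1 - Real.exp (-(c * (ρ ^ 2 : ℝ) ^ (-(α / 2)))) ≤ c * (ρ ^ 2 : ℝ) ^ (-(α / 2)) :=
      one_sub_exp_neg_le (by positivity)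
    calc ρ * (1 - Real.exp (-(c * (ρ ^ 2 : ℝ) ^ (-(α / 2)))))
        ≤ ρ * (c * (ρ ^ 2 : ℝ) ^ (-(α / 2))) := mul_le_mul_of_nonneg_left hle hρ0.le
      _ = c * ρ ^ (1 - α) := by
          rw [aux_sq_rpow hρ0, show 2 * -(α / 2) = -α by ring]
          rw [show ρ * (c * ρ ^ (-α)) = c * (ρ * ρ ^ (-α)) by ring,
            show ρ * ρ ^ (-α) = ρ ^ (1 + -α) by rw [Real.rpow_add hρ0, Real.rpow_one],
            show (1:ℝ) + -α = 1 - α by ring]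

lemma aux_radial_integral {c α : ℝ} (hc : 0 < c) (hα : 2 < α) :
    ∫ ρ in Ioi (0:ℝ), ρ * (1 - Real.exp (-(c * (ρ ^ 2 : ℝ) ^ (-(α / 2)))))
      = c ^ (2 / α) * Real.Gamma (1 - 2 / α) / 2 := by
  have key := integral_comp_rpow_Ioi_of_pos
    (g := fun x : ℝ => 1 - Real.exp (-(c * x ^ (-(α / 2))))) (p := 2) two_pos
  have hEq : ∀ x : ℝ, ((2:ℝ) * x ^ ((2:ℝ) - 1)) • (1 - Real.exp (-(c * (x ^ (2:ℝ)) ^ (-(α / 2)))))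
      = 2 * (x * (1 - Real.exp (-(c * (x ^ 2 : ℝ) ^ (-(α / 2)))))) := by
    intro x
    have h1 : x ^ ((2:ℝ) - 1) = x := by norm_num
    have h2 : x ^ (2:ℝ) = (x ^ 2 : ℝ) := by
      rw [← Real.rpow_natCast x 2]; norm_num
    rw [smul_eq_mul, h1, h2]; ring
  simp only [hEq] at key
  rw [integral_const_mul, aux_J hc hα] at key
  linarith

lemma aux_2d_meas {c α : ℝ} :
    Measurable (fun p : ℝ × ℝ => 1 - Real.exp (-(c * (p.1 ^ 2 + p.2 ^ 2) ^ (-(α / 2))))) := by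
  fun_prop

lemma aux_symm_apply_val {c α : ℝ} (p : ℝ × ℝ) :
    (1 - Real.exp (-(c * ((polarCoord.symm p).1 ^ 2 + (polarCoord.symm p).2 ^ 2) ^ (-(α / 2)))))
      = 1 - Real.exp (-(c * ((p.1 ^ 2 : ℝ)) ^ (-(α / 2)))) := by
  have h : (polarCoord.symm p).1 ^ 2 + (polarCoord.symm p).2 ^ 2 = p.1 ^ 2 := by
    show (p.1 * Real.cos p.2) ^ 2 + (p.1 * Real.sin p.2) ^ 2 = p.1 ^ 2
    have := Real.sin_sq_add_cos_sq p.2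
    nlinarith
  rw [h]

lemma aux_2d_integrable {c α : ℝ} (hc : 0 < c) (hα : 2 < α) :
    Integrable (fun p : ℝ × ℝ => 1 - Real.exp (-(c * (p.1 ^ 2 + p.2 ^ 2) ^ (-(α / 2))))) := by
  set F := fun p : ℝ × ℝ => 1 - Real.exp (-(c * (p.1 ^ 2 + p.2 ^ 2) ^ (-(α / 2)))) with hF
  set B : ℝ × ℝ → ℝ × ℝ →L[ℝ] ℝ × ℝ := fun p =>
    LinearMap.toContinuousLinearMap (Matrix.toLin (Module.Basis.finTwoProd ℝ) (Module.Basis.finTwoProd ℝ)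
      !![Real.cos p.2, -p.1 * Real.sin p.2; Real.sin p.2, p.1 * Real.cos p.2]) with hB
  have hder : ∀ p ∈ polarCoord.target,
      HasFDerivWithinAt polarCoord.symm (B p) polarCoord.target p :=
    fun p _ => (hasFDerivAt_polarCoord_symm p).hasFDerivWithinAt
  have B_det : ∀ p, (B p).det = p.1 := by
    intro p
    conv_rhs => rw [← one_mul p.1, ← Real.cos_sq_add_sin_sq p.2]
    simp only [hB, neg_mul, LinearMap.det_toContinuousLinearMap, LinearMap.det_toLin,
      Matrix.det_fin_two_of, sub_neg_eq_add]
    ring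
  have hinj : InjOn polarCoord.symm polarCoord.target := by
    have := polarCoord.symm.injOn
    rwa [OpenPartialHomeomorph.symm_source] at this
  have key := integrableOn_image_iff_integrableOn_abs_det_fderiv_smul volume
    polarCoord.open_target.measurableSet hder hinj F
  rw [polarCoord.symm_image_target_eq_source] at key
  have hsrc : IntegrableOn F polarCoord.source ↔ Integrable F := by
    rw [IntegrableOn, Measure.restrict_congr_set polarCoord_source_ae_eq_univ,
      Measure.restrict_univ]
  rw [hsrc] at key
  rw [key]
  have hEq : EqOn
      (fun p : ℝ × ℝ => (fun ρ => ρ * (1 - Real.exp (-(c * (ρ ^ 2 : ℝ) ^ (-(α / 2)))))) p.1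
        * (fun _ : ℝ => (1:ℝ)) p.2)
      (fun p : ℝ × ℝ => |(B p).det| • F (polarCoord.symm p)) polarCoord.target := by
    intro p hp
    simp only [mul_one]
    rw [B_det, abs_of_pos (hp.1 : (0:ℝ) < p.1), smul_eq_mul, hF]
    simp only
    rw [aux_symm_apply_val]
  refine IntegrableOn.congr_fun ?_ hEq polarCoord.open_target.measurableSet
  show IntegrableOn _ (Ioi (0:ℝ) ×ˢ Ioo (-π) π) volume
  rw [IntegrableOn, Measure.volume_eq_prod, ← Measure.prod_restrict]
  exact Integrable.mul_prod (aux_radial_integrableOn hc hα)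
    ((integrableOn_const_iff (C := (1:ℝ))).mpr (Or.inr measure_Ioo_lt_top))

lemma aux_2d_integral {c α : ℝ} (hc : 0 < c) (hα : 2 < α) :
    ∫ p : ℝ × ℝ, (1 - Real.exp (-(c * (p.1 ^ 2 + p.2 ^ 2) ^ (-(α / 2)))))
      = π * (c ^ (2 / α) * Real.Gamma (1 - 2 / α)) := by
  rw [← integral_comp_polarCoord_symm]
  have hEq : EqOn
      (fun p : ℝ × ℝ => p.1 • (1 - Real.exp
        (-(c * ((polarCoord.symm p).1 ^ 2 + (polarCoord.symm p).2 ^ 2) ^ (-(α / 2))))))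
      (fun p : ℝ × ℝ => (fun ρ => ρ * (1 - Real.exp (-(c * (ρ ^ 2 : ℝ) ^ (-(α / 2)))))) p.1
        * (fun _ : ℝ => (1:ℝ)) p.2) polarCoord.target := by
    intro p hp
    simp only [smul_eq_mul, aux_symm_apply_val, mul_one]
  rw [setIntegral_congr_fun polarCoord.open_target.measurableSet hEq]
  have htgt : polarCoord.target = Ioi (0:ℝ) ×ˢ Ioo (-π) π := rfl
  rw [htgt, Measure.volume_eq_prod,
    setIntegral_prod_mul (f := fun ρ : ℝ => ρ * (1 - Real.exp (-(c * (ρ ^ 2 : ℝ) ^ (-(α / 2))))))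
      (g := fun _ : ℝ => (1:ℝ)), aux_radial_integral hc hα]
  rw [setIntegral_const, Real.volume_real_Ioo_of_le (by linarith [Real.pi_pos] : -π ≤ π), smul_eq_mul,
    mul_one]
  ring

/-- For all real `c > 0` and `α > 2`,
`∫₀^∞ ∫₀^∞ (1 - exp (-c (r² + t²)^(-α/2))) dt dr = (π/4) c^(2/α) Γ(1 - 2/α)`. -/
theorem stmt_5 (c α : ℝ) (hc : 0 < c) (hα : 2 < α) :
    ∫ r in Set.Ioi (0 : ℝ), ∫ t in Set.Ioi (0 : ℝ),
        (1 - Real.exp (-(c * (r ^ 2 + t ^ 2) ^ (-(α / 2))))) =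
      (π / 4) * c ^ (2 / α) * Real.Gamma (1 - 2 / α) := by
  have h2d := aux_2d_integrable hc hα
  have hval := aux_2d_integral hc hα
  have inner : ∀ r : ℝ, ∫ t in Ioi (0:ℝ), (1 - Real.exp (-(c * (r ^ 2 + t ^ 2) ^ (-(α / 2)))))
      = (∫ t : ℝ, (1 - Real.exp (-(c * (r ^ 2 + t ^ 2) ^ (-(α / 2)))))) / 2 := by
    intro r
    have h := integral_comp_abs
      (f := fun t => 1 - Real.exp (-(c * (r ^ 2 + t ^ 2) ^ (-(α / 2)))))
    simp only [sq_abs] at h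
    linarith
  simp only [inner]
  rw [integral_div]
  have outer : ∫ r in Ioi (0:ℝ), ∫ t : ℝ, (1 - Real.exp (-(c * (r ^ 2 + t ^ 2) ^ (-(α / 2)))))
      = (∫ r : ℝ, ∫ t : ℝ, (1 - Real.exp (-(c * (r ^ 2 + t ^ 2) ^ (-(α / 2)))))) / 2 := by
    have h := integral_comp_abs
      (f := fun r => ∫ t : ℝ, (1 - Real.exp (-(c * (r ^ 2 + t ^ 2) ^ (-(α / 2))))))
    simp only [sq_abs] at h
    linarith
  rw [outer]
  have hprod : ∫ r : ℝ, ∫ t : ℝ, (1 - Real.exp (-(c * (r ^ 2 + t ^ 2) ^ (-(α / 2)))))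
      = ∫ p : ℝ × ℝ, (1 - Real.exp (-(c * (p.1 ^ 2 + p.2 ^ 2) ^ (-(α / 2))))) := by
    rw [Measure.volume_eq_prod]
    rw [integral_prod]
    rwa [← Measure.volume_eq_prod]
  rw [hprod, hval]
  ring
end

section
/- Let ζ be a nonnegative random variable on a probability space, let α > 2 and s > 0, and assume E[ζ^{2/α}] < ∞. Then ∫₀^∞ ∫₀^∞ E[1 − exp(−s ζ (r² + t²)^{−α/2})] dt dr = (π/4) Γ(1 − 2/α) s^{2/α} E[ζ^{2/α}], where Γ is the real Gamma function. -/
open MeasureTheory Real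

open scoped ENNReal

set_option maxHeartbeats 1000000

section Helpers

lemma sqrt_quarter : ∫ x in (0:ℝ)..1, Real.sqrt (1 - x ^ 2) = π / 4 := by
  have h2 : ∫ x in (-1:ℝ)..0, Real.sqrt (1 - x ^ 2) = ∫ x in (0:ℝ)..1, Real.sqrt (1 - x ^ 2) := by
    have := intervalIntegral.integral_comp_neg (a := (0:ℝ)) (b := 1)
      (fun x => Real.sqrt (1 - x ^ 2))
    simp only [neg_neg, neg_zero] at this ⊢
    rw [← this]
    congr 1
    ext x
    ring_nf
  have h3 : (∫ x in (-1:ℝ)..1, Real.sqrt (1 - x ^ 2)) =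
      (∫ x in (-1:ℝ)..0, Real.sqrt (1 - x ^ 2)) + ∫ x in (0:ℝ)..1, Real.sqrt (1 - x ^ 2) := by
    rw [intervalIntegral.integral_add_adjacent_intervals] <;>
    · apply ContinuousOn.intervalIntegrable
      exact (continuousOn_const.sub (continuousOn_pow 2)).sqrt
  have h4 := integral_sqrt_one_sub_sq
  rw [h3, h2] at h4
  linarith

lemma sqrt_scaled (R : ℝ) (hR : 0 ≤ R) :
    ∫ r in (0:ℝ)..R, Real.sqrt (R ^ 2 - r ^ 2) = π / 4 * R ^ 2 := by
  rcases eq_or_lt_of_le hR with h | hR0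
  · simp [← h]
  have key := intervalIntegral.integral_comp_mul_left
    (fun y => Real.sqrt (R ^ 2 - y ^ 2)) (ne_of_gt hR0) (a := 0) (b := 1)
  have heq : ∀ x : ℝ, Real.sqrt (R ^ 2 - (R * x) ^ 2) = R * Real.sqrt (1 - x ^ 2) := by
    intro x
    rw [show R ^ 2 - (R * x) ^ 2 = R ^ 2 * (1 - x ^ 2) by ring, Real.sqrt_mul (sq_nonneg R),
      Real.sqrt_sq hR]
  simp only [heq, mul_zero, mul_one] at key
  rw [intervalIntegral.integral_const_mul, sqrt_quarter] at key
  have : (∫ r in (0:ℝ)..R, Real.sqrt (R ^ 2 - r ^ 2)) = R * (R * (π / 4)) := by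
    rw [smul_eq_mul] at key
    field_simp at key
    linarith [key]
  rw [this]; ring

lemma quarter_disk (R : ℝ) (hR : 0 ≤ R) :
    ∫⁻ r in Set.Ioi (0:ℝ), ∫⁻ t in Set.Ioi (0:ℝ),
      (if r ^ 2 + t ^ 2 < R ^ 2 then (1:ℝ≥0∞) else 0) = ENNReal.ofReal (π / 4 * R ^ 2) := by
  have hinner : ∀ r : ℝ, (∫⁻ t in Set.Ioi (0:ℝ),
      (if r ^ 2 + t ^ 2 < R ^ 2 then (1:ℝ≥0∞) else 0)) =
      ENNReal.ofReal (Real.sqrt (R ^ 2 - r ^ 2)) := by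
    intro r
    have hs : MeasurableSet {t : ℝ | r ^ 2 + t ^ 2 < R ^ 2} := by
      apply measurableSet_lt <;> fun_prop
    have : (fun t : ℝ => (if r ^ 2 + t ^ 2 < R ^ 2 then (1:ℝ≥0∞) else 0)) =
        Set.indicator {t : ℝ | r ^ 2 + t ^ 2 < R ^ 2} (fun _ => (1:ℝ≥0∞)) := by
      ext t; simp [Set.indicator_apply, Set.mem_setOf_eq]
    rw [this, lintegral_indicator hs, Measure.restrict_restrict hs, setLIntegral_one]
    have hset : {t : ℝ | r ^ 2 + t ^ 2 < R ^ 2} ∩ Set.Ioi 0 =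
        Set.Ioo 0 (Real.sqrt (R ^ 2 - r ^ 2)) := by
      ext t
      simp only [Set.mem_inter_iff, Set.mem_setOf_eq, Set.mem_Ioi, Set.mem_Ioo]
      constructor
      · rintro ⟨h1, h2⟩
        exact ⟨h2, (Real.lt_sqrt h2.le).mpr (by linarith)⟩
      · rintro ⟨h1, h2⟩
        have := (Real.lt_sqrt h1.le).mp h2
        exact ⟨by linarith, h1⟩
    rw [hset, Real.volume_Ioo, sub_zero]
  simp_rw [hinner]
  have hint : IntegrableOn (fun r : ℝ => Real.sqrt (R ^ 2 - r ^ 2)) (Set.Ioi 0) := by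
    rw [← Set.Ioc_union_Ioi_eq_Ioi hR, integrableOn_union]
    constructor
    · exact (((continuousOn_const.sub (continuousOn_pow 2)).sqrt).integrableOn_Icc).mono_set
        Set.Ioc_subset_Icc_self
    · apply (integrableOn_congr_fun ?_ measurableSet_Ioi).mpr (integrableOn_zero)
      intro x hx
      simp only [Set.mem_Ioi] at hx
      have hle : R ^ 2 - x ^ 2 ≤ 0 := by nlinarith
      simp [Real.sqrt_eq_zero'.mpr hle]
  rw [← ofReal_integral_eq_lintegral_ofReal hint
    (Filter.Eventually.of_forall fun x => Real.sqrt_nonneg _)]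
  congr 1
  have hint1 : IntegrableOn (fun r : ℝ => Real.sqrt (R ^ 2 - r ^ 2)) (Set.Ioc 0 R) :=
    hint.mono_set (Set.Ioc_subset_Ioi_self)
  have hint2 : IntegrableOn (fun r : ℝ => Real.sqrt (R ^ 2 - r ^ 2)) (Set.Ioi R) :=
    hint.mono_set (fun x hx => lt_of_le_of_lt hR hx)
  have hsplit : ∫ r in Set.Ioi (0:ℝ), Real.sqrt (R ^ 2 - r ^ 2) =
      (∫ r in Set.Ioc 0 R, Real.sqrt (R ^ 2 - r ^ 2))
        + ∫ r in Set.Ioi R, Real.sqrt (R ^ 2 - r ^ 2) := by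
    rw [← setIntegral_union (Set.Ioc_disjoint_Ioi le_rfl) measurableSet_Ioi hint1 hint2,
      Set.Ioc_union_Ioi_eq_Ioi hR]
  have hzero : ∫ r in Set.Ioi R, Real.sqrt (R ^ 2 - r ^ 2) = 0 := by
    rw [setIntegral_congr_fun measurableSet_Ioi (g := fun _ => (0:ℝ))
      (fun x hx => by
        simp only [Set.mem_Ioi] at hx
        exact Real.sqrt_eq_zero'.mpr (by nlinarith))]
    simp
  rw [hsplit, hzero, add_zero, ← intervalIntegral.integral_of_le hR, sqrt_scaled R hR]

lemma layer (a : ℝ) (ha : 0 ≤ a) :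
    ∫⁻ u in Set.Ioi (0:ℝ), (if u < a then ENNReal.ofReal (Real.exp (-u)) else 0)
      = ENNReal.ofReal (1 - Real.exp (-a)) := by
  have : (fun u : ℝ => if u < a then ENNReal.ofReal (Real.exp (-u)) else 0) =
      Set.indicator (Set.Iio a) (fun u => ENNReal.ofReal (Real.exp (-u))) := by
    ext u; simp [Set.indicator_apply]
  rw [this, lintegral_indicator measurableSet_Iio, Measure.restrict_restrict measurableSet_Iio]
  have hset : Set.Iio a ∩ Set.Ioi 0 = Set.Ioo 0 a := by
    ext u; simp [Set.mem_Ioo, and_comm]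
  rw [hset]
  have hint : IntegrableOn (fun u : ℝ => Real.exp (-u)) (Set.Ioo 0 a) :=
    ((Real.continuous_exp.comp continuous_neg).continuousOn.integrableOn_Icc).mono_set
      Set.Ioo_subset_Icc_self
  rw [← ofReal_integral_eq_lintegral_ofReal hint
    (Filter.Eventually.of_forall fun x => (Real.exp_pos _).le)]
  congr 1
  rw [setIntegral_congr_set Ioo_ae_eq_Ioc, ← intervalIntegral.integral_of_le ha,
    intervalIntegral.integral_comp_neg (fun x => Real.exp x), integral_exp]
  simp

lemma gammaPiece {p : ℝ} (hp : 0 < p) (hp1 : p < 1) :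
    ∫⁻ u in Set.Ioi (0:ℝ), ENNReal.ofReal (Real.exp (-u) * u ^ (-p))
      = ENNReal.ofReal (Real.Gamma (1 - p)) := by
  have h1 : (0:ℝ) < 1 - p := by linarith
  rw [Real.Gamma_eq_integral h1]
  rw [ofReal_integral_eq_lintegral_ofReal (Real.GammaIntegral_convergent h1) ?_]
  · apply setLIntegral_congr_fun measurableSet_Ioi
    exact fun x hx => by norm_num
  · filter_upwards [ae_restrict_mem measurableSet_Ioi] with x hx
    exact mul_nonneg (Real.exp_pos _).le (Real.rpow_nonneg (le_of_lt hx) _)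

lemma stepA {α : ℝ} (hα : 2 < α) (c : ℝ) (hc : 0 ≤ c) :
    ∫⁻ r in Set.Ioi (0:ℝ), ∫⁻ t in Set.Ioi (0:ℝ),
      ENNReal.ofReal (1 - Real.exp (-(c * (r ^ 2 + t ^ 2) ^ (-(α / 2)))))
      = ENNReal.ofReal (π / 4 * Real.Gamma (1 - 2 / α) * c ^ (2 / α)) := by
  have hα0 : (0:ℝ) < α := by linarith
  set F : ℝ → ℝ → ℝ → ℝ≥0∞ := fun r t u =>
    if u < c * (r ^ 2 + t ^ 2) ^ (-(α / 2)) then ENNReal.ofReal (Real.exp (-u)) else 0 with hF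
  -- measurability of the triple function
  have hm : Measurable fun q : (ℝ × ℝ) × ℝ => F q.1.1 q.1.2 q.2 := by
    apply Measurable.ite ?_ (by fun_prop) measurable_const
    apply measurableSet_lt (by fun_prop)
    apply Measurable.const_mul
    exact ((measurable_fst.fst.pow_const 2).add (measurable_fst.snd.pow_const 2)).pow
      measurable_const
  -- layer-cake rewrite
  have h1 : ∀ r t : ℝ, ENNReal.ofReal (1 - Real.exp (-(c * (r ^ 2 + t ^ 2) ^ (-(α / 2))))) =
      ∫⁻ u in Set.Ioi (0:ℝ), F r t u := fun r t =>
    (layer _ (mul_nonneg hc (Real.rpow_nonneg (by positivity) _))).symm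
  simp_rw [h1]
  -- swap u to the outside
  have swap1 : ∀ r : ℝ, (∫⁻ t in Set.Ioi (0:ℝ), ∫⁻ u in Set.Ioi (0:ℝ), F r t u) =
      ∫⁻ u in Set.Ioi (0:ℝ), ∫⁻ t in Set.Ioi (0:ℝ), F r t u := by
    intro r
    apply lintegral_lintegral_swap
    exact (hm.comp ((measurable_const.prodMk measurable_fst).prodMk
      measurable_snd)).aemeasurable
  simp_rw [swap1]
  have swap2 : (∫⁻ r in Set.Ioi (0:ℝ), ∫⁻ u in Set.Ioi (0:ℝ),
        ∫⁻ t in Set.Ioi (0:ℝ), F r t u) =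
      ∫⁻ u in Set.Ioi (0:ℝ), ∫⁻ r in Set.Ioi (0:ℝ), ∫⁻ t in Set.Ioi (0:ℝ), F r t u := by
    apply lintegral_lintegral_swap
    apply Measurable.aemeasurable
    apply Measurable.lintegral_prod_right (f := fun (p : ℝ × ℝ) t => F p.1 t p.2)
    exact hm.comp ((measurable_fst.fst.prodMk measurable_snd).prodMk measurable_fst.snd)
  rw [swap2]
  have hp : (0:ℝ) < 2 / α := by positivity
  have hp1 : 2 / α < 1 := (div_lt_one hα0).mpr hα
  have key : ∀ u ∈ Set.Ioi (0:ℝ),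
      (∫⁻ r in Set.Ioi (0:ℝ), ∫⁻ t in Set.Ioi (0:ℝ), F r t u)
      = ENNReal.ofReal (π / 4 * c ^ (2 / α))
        * ENNReal.ofReal (Real.exp (-u) * u ^ (-(2 / α))) := by
    intro u hu
    rw [Set.mem_Ioi] at hu
    set R : ℝ := (c / u) ^ (1 / α) with hRdef
    have hcu : 0 ≤ c / u := div_nonneg hc hu.le
    have hR : 0 ≤ R := Real.rpow_nonneg hcu _
    have hR2 : R ^ 2 = (c / u) ^ (2 / α) := by
      rw [hRdef, ← Real.rpow_natCast ((c / u) ^ (1 / α)) 2, ← Real.rpow_mul hcu]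
      norm_num
      rw [show α⁻¹ * 2 = 2 / α by ring]
    have hiff : ∀ x : ℝ, 0 < x → (u < c * x ^ (-(α / 2)) ↔ x < R ^ 2) := by
      intro x hx
      have hy : 0 < x ^ (α / 2) := Real.rpow_pos_of_pos hx _
      have h1 : (u < c / x ^ (α / 2)) ↔ x ^ (α / 2) < c / u := by
        rw [lt_div_iff₀ hy, lt_div_iff₀ hu, mul_comm]
      have hrw : ((c / u) ^ (2 / α)) ^ (α / 2) = c / u := by
        rw [← Real.rpow_mul hcu]
        rw [show 2 / α * (α / 2) = 1 by field_simp, Real.rpow_one]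
      have h2 : x ^ (α / 2) < c / u ↔ x < (c / u) ^ (2 / α) := by
        conv_lhs => rw [← hrw]
        exact Real.rpow_lt_rpow_iff hx.le (Real.rpow_nonneg hcu _) (by positivity)
      rw [Real.rpow_neg hx.le, ← div_eq_mul_inv, hR2]
      exact h1.trans h2
    have hpt : ∀ r ∈ Set.Ioi (0:ℝ), (∫⁻ t in Set.Ioi (0:ℝ), F r t u) =
        ENNReal.ofReal (Real.exp (-u)) *
          ∫⁻ t in Set.Ioi (0:ℝ), (if r ^ 2 + t ^ 2 < R ^ 2 then (1:ℝ≥0∞) else 0) := by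
      intro r hr
      rw [Set.mem_Ioi] at hr
      rw [← lintegral_const_mul _ (Measurable.ite
        (measurableSet_lt (by fun_prop) measurable_const) measurable_const measurable_const)]
      apply setLIntegral_congr_fun measurableSet_Ioi
      intro t ht
      have hx : 0 < r ^ 2 + t ^ 2 := add_pos_of_pos_of_nonneg (pow_pos hr 2) (sq_nonneg t)
      simp only [hF]
      by_cases hcond : r ^ 2 + t ^ 2 < R ^ 2
      · rw [if_pos ((hiff _ hx).mpr hcond), if_pos hcond, mul_one]
      · rw [if_neg (fun hl => hcond ((hiff _ hx).mp hl)), if_neg hcond, mul_zero]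
    rw [setLIntegral_congr_fun measurableSet_Ioi hpt]
    rw [lintegral_const_mul _ ?min]
    case min =>
      apply Measurable.lintegral_prod_right
        (f := fun r t => (if r ^ 2 + t ^ 2 < R ^ 2 then (1:ℝ≥0∞) else 0))
      exact Measurable.ite (measurableSet_lt (by fun_prop) measurable_const)
        measurable_const measurable_const
    rw [quarter_disk R hR, hR2, Real.div_rpow hc hu.le]
    rw [← ENNReal.ofReal_mul (Real.exp_pos _).le,
      ← ENNReal.ofReal_mul (mul_nonneg (by positivity) (Real.rpow_nonneg hc _))]
    congr 1
    rw [Real.rpow_neg hu.le]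
    ring
  rw [setLIntegral_congr_fun measurableSet_Ioi key]
  rw [lintegral_const_mul _ ?mg]
  case mg => exact (measurable_neg.exp.mul (measurable_id'.pow measurable_const)).ennreal_ofReal
  rw [gammaPiece hp hp1]
  rw [← ENNReal.ofReal_mul (mul_nonneg (by positivity) (Real.rpow_nonneg hc _))]
  congr 1
  ring

lemma one_sub_exp_le_rpow {x p : ℝ} (hx : 0 ≤ x) (hp0 : 0 < p) (hp1 : p ≤ 1) :
    1 - Real.exp (-x) ≤ x ^ p := by
  rcases eq_or_lt_of_le hx with h0 | h0
  · simp [← h0, Real.zero_rpow (ne_of_gt hp0)]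
  rcases le_or_gt x 1 with h | h
  · calc 1 - Real.exp (-x) ≤ x := by nlinarith [Real.add_one_le_exp (-x)]
    _ = x ^ (1:ℝ) := (Real.rpow_one x).symm
    _ ≤ x ^ p := Real.rpow_le_rpow_of_exponent_ge h0 h hp1
  · calc 1 - Real.exp (-x) ≤ 1 := by nlinarith [Real.exp_pos (-x)]
    _ = (1:ℝ) ^ p := (Real.one_rpow p).symm
    _ ≤ x ^ p := Real.rpow_le_rpow zero_le_one h.le hp0.le

end Helpers

/-- Integrability claim in Lemma 2: for a nonnegative random variable `ζ`
with `E[ζ^(2/α)] < ∞`, `α > 2` and `s > 0`,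
`∫₀^∞ ∫₀^∞ E[1 - exp (-s ζ (r² + t²)^(-α/2))] dt dr
  = (π/4) Γ(1 - 2/α) s^(2/α) E[ζ^(2/α)]`. -/
theorem stmt_6 {Ω : Type*} [MeasureSpace Ω] (P : Measure Ω) [IsProbabilityMeasure P]
    (ζ : Ω → ℝ) (hζmeas : Measurable ζ) (hζpos : ∀ ω, 0 ≤ ζ ω)
    (α s : ℝ) (hα : 2 < α) (hs : 0 < s)
    (hmom : Integrable (fun ω => ζ ω ^ (2 / α)) P) :
    ∫ r in Set.Ioi (0 : ℝ), ∫ t in Set.Ioi (0 : ℝ),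
        ∫ ω, (1 - Real.exp (-(s * ζ ω * (r ^ 2 + t ^ 2) ^ (-(α / 2))))) ∂P =
      (π / 4) * Real.Gamma (1 - 2 / α) * s ^ (2 / α) * ∫ ω, ζ ω ^ (2 / α) ∂P := by
  have hα0 : (0:ℝ) < α := by linarith
  have hp : (0:ℝ) < 2 / α := by positivity
  have hp1 : 2 / α ≤ 1 := ((div_lt_one hα0).mpr hα).le
  set G : Ω → ℝ → ℝ → ℝ≥0∞ := fun ω r t =>
    ENNReal.ofReal (1 - Real.exp (-(s * ζ ω * (r ^ 2 + t ^ 2) ^ (-(α / 2))))) with hG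
  have hqnn : ∀ r t : ℝ, (0:ℝ) ≤ (r ^ 2 + t ^ 2) ^ (-(α / 2)) := fun r t =>
    Real.rpow_nonneg (by positivity) _
  have hxnn : ∀ ω (r t : ℝ), (0:ℝ) ≤ s * ζ ω * (r ^ 2 + t ^ 2) ^ (-(α / 2)) := fun ω r t =>
    mul_nonneg (mul_nonneg hs.le (hζpos ω)) (hqnn r t)
  have hgnn : ∀ ω (r t : ℝ), (0:ℝ) ≤ 1 - Real.exp (-(s * ζ ω * (r ^ 2 + t ^ 2) ^ (-(α / 2)))) := by
    intro ω r t
    have := Real.exp_le_one_iff.mpr (neg_nonpos_of_nonneg (hxnn ω r t))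
    linarith
  have hgle1 : ∀ ω (r t : ℝ), 1 - Real.exp (-(s * ζ ω * (r ^ 2 + t ^ 2) ^ (-(α / 2)))) ≤ 1 := by
    intro ω r t
    have := Real.exp_pos (-(s * ζ ω * (r ^ 2 + t ^ 2) ^ (-(α / 2))))
    linarith
  -- joint measurability
  have hGm : Measurable fun q : Ω × ℝ × ℝ => G q.1 q.2.1 q.2.2 := by
    apply Measurable.ennreal_ofReal
    apply Measurable.const_sub
    apply Measurable.exp
    apply Measurable.neg
    exact (measurable_const.mul (hζmeas.comp measurable_fst)).mul
      (((measurable_snd.fst.pow_const 2).add (measurable_snd.snd.pow_const 2)).pow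
        measurable_const)
  have hBm : Measurable fun p : ℝ × ℝ => ∫⁻ ω, G ω p.1 p.2 ∂P := by
    apply Measurable.lintegral_prod_right (f := fun (p : ℝ × ℝ) ω => G ω p.1 p.2)
    simp only [hG]
    apply Measurable.ennreal_ofReal
    apply Measurable.const_sub
    apply Measurable.exp
    apply Measurable.neg
    exact (measurable_const.mul (hζmeas.comp measurable_snd)).mul
      (((measurable_fst.fst.pow_const 2).add (measurable_fst.snd.pow_const 2)).pow
        measurable_const)
  -- innermost conversion
  have conv1 : ∀ r t : ℝ,
      (∫ ω, (1 - Real.exp (-(s * ζ ω * (r ^ 2 + t ^ 2) ^ (-(α / 2))))) ∂P)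
        = (∫⁻ ω, G ω r t ∂P).toReal := by
    intro r t
    rw [integral_eq_lintegral_of_nonneg_ae (Filter.Eventually.of_forall fun ω => hgnn ω r t)
      (((hζmeas.const_mul s).mul_const _).neg.exp.const_sub 1).aestronglyMeasurable]

  have hGle1' : ∀ r t : ℝ, (∫⁻ ω, G ω r t ∂P) ≤ 1 := by
    intro r t
    calc ∫⁻ ω, G ω r t ∂P ≤ ∫⁻ _, 1 ∂P := lintegral_mono fun ω => by
          simp only [hG]; exact ENNReal.ofReal_le_one.mpr (hgle1 ω r t)
      _ = 1 := by simp
  have conv2 : ∀ r : ℝ, (∫ t in Set.Ioi (0:ℝ), (∫⁻ ω, G ω r t ∂P).toReal)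
      = (∫⁻ t in Set.Ioi (0:ℝ), ∫⁻ ω, G ω r t ∂P).toReal := by
    intro r
    apply integral_toReal
    · apply Measurable.aemeasurable
      apply Measurable.lintegral_prod_right (f := fun (t : ℝ) ω => G ω r t)
      simp only [hG]
      apply Measurable.ennreal_ofReal
      apply Measurable.const_sub
      apply Measurable.exp
      apply Measurable.neg
      exact (measurable_const.mul (hζmeas.comp measurable_snd)).mul
        ((measurable_const.add (measurable_fst.pow_const 2)).pow measurable_const)
    · exact Filter.Eventually.of_forall fun t => lt_of_le_of_lt (hGle1' r t) ENNReal.one_lt_top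
  have hGbound : ∀ ω (r t : ℝ), G ω r t ≤
      ENNReal.ofReal ((s * ζ ω) ^ (2 / α)) * ENNReal.ofReal ((r ^ 2 + t ^ 2)⁻¹) := by
    intro ω r t
    simp only [hG]
    rw [← ENNReal.ofReal_mul (Real.rpow_nonneg (mul_nonneg hs.le (hζpos ω)) _)]
    apply ENNReal.ofReal_le_ofReal
    refine (one_sub_exp_le_rpow (hxnn ω r t) hp hp1).trans (le_of_eq ?_)
    rw [Real.mul_rpow (mul_nonneg hs.le (hζpos ω)) (hqnn r t),
      ← Real.rpow_mul (by positivity : (0:ℝ) ≤ r ^ 2 + t ^ 2),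
      show -(α / 2) * (2 / α) = -1 by field_simp, Real.rpow_neg_one]
  have hmomnn : 0 ≤ᵐ[P] fun ω => ζ ω ^ (2 / α) :=
    Filter.Eventually.of_forall fun ω => Real.rpow_nonneg (hζpos ω) _
  have hMeq : (∫⁻ ω, ENNReal.ofReal ((s * ζ ω) ^ (2 / α)) ∂P)
      = ENNReal.ofReal (s ^ (2 / α)) * ENNReal.ofReal (∫ ω, ζ ω ^ (2 / α) ∂P) := by
    have hpt : ∀ ω, ENNReal.ofReal ((s * ζ ω) ^ (2 / α)) =
        ENNReal.ofReal (s ^ (2 / α)) * ENNReal.ofReal (ζ ω ^ (2 / α)) := by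
      intro ω
      rw [Real.mul_rpow hs.le (hζpos ω), ENNReal.ofReal_mul (Real.rpow_nonneg hs.le _)]
    simp_rw [hpt]
    rw [lintegral_const_mul _ ((hζmeas.pow measurable_const).ennreal_ofReal),
      ofReal_integral_eq_lintegral_ofReal hmom hmomnn]
  have hMfin : (∫⁻ ω, ENNReal.ofReal ((s * ζ ω) ^ (2 / α)) ∂P) < ⊤ := by
    rw [hMeq]
    exact ENNReal.mul_lt_top ENNReal.ofReal_lt_top ENNReal.ofReal_lt_top
  have hinv : ∀ r : ℝ, 0 < r →
      (∫⁻ t in Set.Ioi (0:ℝ), ENNReal.ofReal ((r ^ 2 + t ^ 2)⁻¹)) < ⊤ := by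
    intro r hr
    have hrne : r ≠ 0 := hr.ne'
    have h1 : Integrable (fun t : ℝ => (r ^ 2)⁻¹ * (1 + (t / r) ^ 2)⁻¹) :=
      (integrable_inv_one_add_sq.comp_div hrne).const_mul _
    have h2 : Integrable (fun t : ℝ => (r ^ 2 + t ^ 2)⁻¹) := by
      apply h1.congr
      apply Filter.Eventually.of_forall
      intro t
      show (r ^ 2)⁻¹ * (1 + (t / r) ^ 2)⁻¹ = (r ^ 2 + t ^ 2)⁻¹
      rw [← mul_inv]
      congr 1
      field_simp
    calc (∫⁻ t in Set.Ioi (0:ℝ), ENNReal.ofReal ((r ^ 2 + t ^ 2)⁻¹))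
        ≤ ∫⁻ t in Set.Ioi (0:ℝ), ‖(r ^ 2 + t ^ 2)⁻¹‖ₑ :=
          lintegral_ofReal_le_lintegral_enorm _
      _ < ⊤ := h2.integrableOn.2
  have Alfin : ∀ r : ℝ, 0 < r →
      (∫⁻ t in Set.Ioi (0:ℝ), ∫⁻ ω, G ω r t ∂P) < ⊤ := by
    intro r hr
    have hb : (∫⁻ t in Set.Ioi (0:ℝ), ∫⁻ ω, G ω r t ∂P)
        ≤ ∫⁻ t in Set.Ioi (0:ℝ), (∫⁻ ω, ENNReal.ofReal ((s * ζ ω) ^ (2 / α)) ∂P)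
            * ENNReal.ofReal ((r ^ 2 + t ^ 2)⁻¹) := by
      apply lintegral_mono
      intro t
      calc ∫⁻ ω, G ω r t ∂P
          ≤ ∫⁻ ω, ENNReal.ofReal ((s * ζ ω) ^ (2 / α))
              * ENNReal.ofReal ((r ^ 2 + t ^ 2)⁻¹) ∂P :=
            lintegral_mono fun ω => hGbound ω r t
        _ = _ := lintegral_mul_const _
            ((hζmeas.const_mul s).pow measurable_const).ennreal_ofReal
    refine lt_of_le_of_lt hb ?_
    rw [lintegral_const_mul (f := fun t => ENNReal.ofReal ((r ^ 2 + t ^ 2)⁻¹)) _ (((measurable_id'.pow_const 2).const_add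
      (r ^ 2)).inv.ennreal_ofReal)]
    exact ENNReal.mul_lt_top hMfin (hinv r hr)
  have conv3 : (∫ r in Set.Ioi (0:ℝ), (∫⁻ t in Set.Ioi (0:ℝ), ∫⁻ ω, G ω r t ∂P).toReal)
      = (∫⁻ r in Set.Ioi (0:ℝ), ∫⁻ t in Set.Ioi (0:ℝ), ∫⁻ ω, G ω r t ∂P).toReal := by
    apply integral_toReal
    · exact (Measurable.lintegral_prod_right
        (f := fun (r t : ℝ) => ∫⁻ ω, G ω r t ∂P) hBm).aemeasurable
    · rw [ae_restrict_iff' measurableSet_Ioi]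
      exact Filter.Eventually.of_forall fun r hr => Alfin r hr
  have swapA : ∀ r : ℝ, (∫⁻ t in Set.Ioi (0:ℝ), ∫⁻ ω, G ω r t ∂P)
      = ∫⁻ ω, (∫⁻ t in Set.Ioi (0:ℝ), G ω r t) ∂P := by
    intro r
    apply lintegral_lintegral_swap
    apply Measurable.aemeasurable
    simp only [hG]
    apply Measurable.ennreal_ofReal
    apply Measurable.const_sub
    apply Measurable.exp
    apply Measurable.neg
    exact (measurable_const.mul (hζmeas.comp measurable_snd)).mul
      ((measurable_const.add (measurable_fst.pow_const 2)).pow measurable_const)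
  have swapB : (∫⁻ r in Set.Ioi (0:ℝ), ∫⁻ ω, (∫⁻ t in Set.Ioi (0:ℝ), G ω r t) ∂P)
      = ∫⁻ ω, (∫⁻ r in Set.Ioi (0:ℝ), ∫⁻ t in Set.Ioi (0:ℝ), G ω r t) ∂P := by
    apply lintegral_lintegral_swap
    apply Measurable.aemeasurable
    apply Measurable.lintegral_prod_right (f := fun (x : ℝ × Ω) t => G x.2 x.1 t)
    simp only [hG]
    apply Measurable.ennreal_ofReal
    apply Measurable.const_sub
    apply Measurable.exp
    apply Measurable.neg
    exact (measurable_const.mul (hζmeas.comp measurable_fst.snd)).mul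
      (((measurable_fst.fst.pow_const 2).add (measurable_snd.pow_const 2)).pow
        measurable_const)
  have hstep : ∀ ω, (∫⁻ r in Set.Ioi (0:ℝ), ∫⁻ t in Set.Ioi (0:ℝ), G ω r t)
      = ENNReal.ofReal (π / 4 * Real.Gamma (1 - 2 / α) * (s * ζ ω) ^ (2 / α)) := by
    intro ω
    simp only [hG]
    exact stepA hα (s * ζ ω) (mul_nonneg hs.le (hζpos ω))
  have hΓpos : 0 < Real.Gamma (1 - 2 / α) :=
    Real.Gamma_pos_of_pos (by linarith [(div_lt_one hα0).mpr hα])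
  have hKnn : (0:ℝ) ≤ π / 4 * Real.Gamma (1 - 2 / α) * s ^ (2 / α) :=
    mul_nonneg (mul_nonneg (by positivity) hΓpos.le) (Real.rpow_nonneg hs.le _)
  have hfinpt : ∀ ω, ENNReal.ofReal (π / 4 * Real.Gamma (1 - 2 / α) * (s * ζ ω) ^ (2 / α)) =
      ENNReal.ofReal (π / 4 * Real.Gamma (1 - 2 / α) * s ^ (2 / α))
        * ENNReal.ofReal (ζ ω ^ (2 / α)) := by
    intro ω
    rw [← ENNReal.ofReal_mul hKnn]
    congr 1
    rw [Real.mul_rpow hs.le (hζpos ω)]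
    ring
  have hInn : (0:ℝ) ≤ ∫ ω, ζ ω ^ (2 / α) ∂P :=
    integral_nonneg fun ω => Real.rpow_nonneg (hζpos ω) _
  simp_rw [conv1, conv2]
  rw [conv3]
  simp_rw [swapA]
  rw [swapB]
  simp_rw [hstep, hfinpt]
  rw [lintegral_const_mul _ ((hζmeas.pow measurable_const).ennreal_ofReal),
    ← ofReal_integral_eq_lintegral_ofReal hmom hmomnn,
    ← ENNReal.ofReal_mul hKnn, ENNReal.toReal_ofReal (mul_nonneg hKnn hInn)]
end

section
/- Let N be a positive integer, κ = (N!)^{−1/N}, and let G be gamma distributed with shape N and rate 1. Then for every y ≥ 0, Pr(G ≤ y) ≥ (1 − exp(−κy))^N. -/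
open MeasureTheory ProbabilityTheory

namespace Stmt13Aux

noncomputable section

open Real Set Filter Topology

/-- gamma(N,1) pdf on `[0,∞)`. -/
def A (N : ℕ) (x : ℝ) : ℝ := x ^ (N - 1) * Real.exp (-x) / (N - 1).factorial

/-- derivative of `H`. -/
def B (N : ℕ) (κ x : ℝ) : ℝ :=
  N * (1 - Real.exp (-(κ * x))) ^ (N - 1) * (κ * Real.exp (-(κ * x)))

def H (N : ℕ) (κ x : ℝ) : ℝ := (1 - Real.exp (-(κ * x))) ^ N

def F (N : ℕ) (x : ℝ) : ℝ := ∫ t in (0:ℝ)..x, A N t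

/-- `log (A/B)` written out. -/
def S (N : ℕ) (κ x : ℝ) : ℝ :=
  ((N - 1 : ℕ) : ℝ) * Real.log x + (-x) - Real.log ((N - 1).factorial) -
    (Real.log (N * κ) + ((N - 1 : ℕ) : ℝ) * Real.log (1 - Real.exp (-(κ * x))) + (-(κ * x)))

/-- derivative of `S`. -/
def T (N : ℕ) (κ x : ℝ) : ℝ :=
  ((N - 1 : ℕ) : ℝ) * (x⁻¹ - κ * (Real.exp (κ * x) - 1)⁻¹) + (κ - 1)

def W (κ x : ℝ) : ℝ := x⁻¹ - κ * (Real.exp (κ * x) - 1)⁻¹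

def W' (κ x : ℝ) : ℝ :=
  -(x ^ 2)⁻¹ + κ * (κ * Real.exp (κ * x) / (Real.exp (κ * x) - 1) ^ 2)

variable {N : ℕ} {κ : ℝ}

section Basic

variable (hN : 0 < N) (hκ : 0 < κ) (hκ1 : κ ≤ 1) (hκN : (N.factorial : ℝ) * κ ^ N = 1)

lemma exp_lt_one {x : ℝ} (hκ : 0 < κ) (hx : 0 < x) : Real.exp (-(κ * x)) < 1 := by
  rw [Real.exp_lt_one_iff]
  nlinarith

lemma one_sub_exp_pos {x : ℝ} (hκ : 0 < κ) (hx : 0 < x) : 0 < 1 - Real.exp (-(κ * x)) := by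
  linarith [exp_lt_one hκ hx]

lemma A_pos {x : ℝ} (hx : 0 < x) : 0 < A N x := by
  unfold A; positivity

lemma B_pos {x : ℝ} (hN : 0 < N) (hκ : 0 < κ) (hx : 0 < x) : 0 < B N κ x := by
  have h1 := one_sub_exp_pos hκ hx
  unfold B
  have : (0:ℝ) < N := by exact_mod_cast hN
  positivity

end Basic

lemma contA (N : ℕ) : Continuous (A N) := by
  unfold A; continuity

lemma hasDerivAt_F (N : ℕ) (x : ℝ) : HasDerivAt (F N) (A N x) x := by
  refine intervalIntegral.integral_hasDerivAt_right
    ((contA N).intervalIntegrable _ _) ?_ (contA N).continuousAt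
  exact (contA N).stronglyMeasurable.stronglyMeasurableAtFilter

lemma hasDerivAt_inner (κ x : ℝ) :
    HasDerivAt (fun y : ℝ => 1 - Real.exp (-(κ * y))) (κ * Real.exp (-(κ * x))) x := by
  have h1 : HasDerivAt (fun y : ℝ => -(κ * y)) (-κ) x := by
    simpa using ((hasDerivAt_id x).const_mul κ).fun_neg
  have h2 := h1.exp
  have h3 := (hasDerivAt_const x (1:ℝ)).fun_sub h2
  exact h3.congr_deriv (by ring)

lemma hasDerivAt_H (N : ℕ) (κ x : ℝ) : HasDerivAt (H N κ) (B N κ x) x := by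
  have := (hasDerivAt_inner κ x).fun_pow N
  unfold H B
  convert this using 1

lemma one_lt_exp' (hκ : 0 < κ) {x : ℝ} (hx : 0 < x) : 1 < Real.exp (κ * x) := by
  have : Real.exp 0 < Real.exp (κ * x) := Real.exp_lt_exp.mpr (by positivity)
  simpa using this

lemma exp_mul_exp_neg (κ x : ℝ) : Real.exp (-(κ * x)) * Real.exp (κ * x) = 1 := by
  rw [← Real.exp_add]; simp

lemma key_frac (hκ : 0 < κ) {x : ℝ} (hx : 0 < x) :
    κ * Real.exp (-(κ * x)) / (1 - Real.exp (-(κ * x))) = κ * (Real.exp (κ * x) - 1)⁻¹ := by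
  have h1 : (1 : ℝ) - Real.exp (-(κ * x)) ≠ 0 := ne_of_gt (one_sub_exp_pos hκ hx)
  have h2 : Real.exp (κ * x) - 1 ≠ 0 := ne_of_gt (sub_pos.mpr (one_lt_exp' hκ hx))
  rw [div_eq_iff h1]
  field_simp
  linear_combination exp_mul_exp_neg κ x

lemma hasDerivAt_S (hN : 0 < N) (hκ : 0 < κ) {x : ℝ} (hx : 0 < x) :
    HasDerivAt (S N κ) (T N κ x) x := by
  have h1e : (1 : ℝ) - Real.exp (-(κ * x)) ≠ 0 := ne_of_gt (one_sub_exp_pos hκ hx)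
  have hlog2 := (hasDerivAt_inner κ x).log h1e
  have hlogx := Real.hasDerivAt_log hx.ne'
  have hkx : HasDerivAt (fun y : ℝ => -(κ * y)) (-κ) x := by
    simpa using ((hasDerivAt_id x).const_mul κ).fun_neg
  have p3 : HasDerivAt (fun y : ℝ => ((N - 1 : ℕ) : ℝ) * Real.log y + (-y))
      (((N - 1 : ℕ) : ℝ) * x⁻¹ + (-1)) x :=
    (hlogx.const_mul _).add (hasDerivAt_id x).neg
  have p4 := (p3.sub_const (Real.log ((N - 1).factorial)))
  have q : HasDerivAt (fun y : ℝ => Real.log (N * κ) +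
      ((N - 1 : ℕ) : ℝ) * Real.log (1 - Real.exp (-(κ * y))) + (-(κ * y)))
      (0 + ((N - 1 : ℕ) : ℝ) * (κ * Real.exp (-(κ * x)) / (1 - Real.exp (-(κ * x)))) + (-κ)) x :=
    ((hasDerivAt_const x _).add (hlog2.const_mul _)).add hkx
  have final := p4.sub q
  unfold S
  refine final.congr_deriv ?_
  rw [T, key_frac hκ hx]
  ring

lemma S_eq_log (hN : 0 < N) (hκ : 0 < κ) {x : ℝ} (hx : 0 < x) :
    S N κ x = Real.log (A N x) - Real.log (B N κ x) := by
  have h1e : (0 : ℝ) < 1 - Real.exp (-(κ * x)) := one_sub_exp_pos hκ hx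
  have hNpos : (0 : ℝ) < (N : ℝ) := by exact_mod_cast hN
  have hA : Real.log (A N x) =
      ((N - 1 : ℕ) : ℝ) * Real.log x + (-x) - Real.log ((N - 1).factorial) := by
    unfold A
    rw [Real.log_div (by positivity) (by positivity),
      Real.log_mul (by positivity) (Real.exp_ne_zero _), Real.log_pow, Real.log_exp]
  have hB : Real.log (B N κ x) = Real.log (N : ℝ) + Real.log κ +
      ((N - 1 : ℕ) : ℝ) * Real.log (1 - Real.exp (-(κ * x))) + (-(κ * x)) := by
    unfold B
    rw [Real.log_mul (by positivity) (by positivity),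
      Real.log_mul (by positivity) (by positivity),
      Real.log_mul (by positivity) (Real.exp_ne_zero _), Real.log_pow, Real.log_exp]
    ring
  rw [hA, hB, S, Real.log_mul (ne_of_gt hNpos) (ne_of_gt hκ)]
  try ring

lemma B_le_A_of_S (hN : 0 < N) (hκ : 0 < κ) {x : ℝ} (hx : 0 < x) (hs : 0 ≤ S N κ x) :
    B N κ x ≤ A N x := by
  rw [S_eq_log hN hκ hx, sub_nonneg] at hs
  exact (Real.log_le_log_iff (B_pos hN hκ hx) (A_pos hx)).mp hs

lemma A_le_B_of_S (hN : 0 < N) (hκ : 0 < κ) {x : ℝ} (hx : 0 < x) (hs : S N κ x ≤ 0) :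
    A N x ≤ B N κ x := by
  rw [S_eq_log hN hκ hx, sub_nonpos] at hs
  exact (Real.log_le_log_iff (A_pos hx) (B_pos hN hκ hx)).mp hs

lemma tendsto_S_zero (hN : 0 < N) (hκ : 0 < κ) (hκN : (N.factorial : ℝ) * κ ^ N = 1) :
    Filter.Tendsto (S N κ) (nhdsWithin 0 (Set.Ioi 0)) (nhds 0) := by
  have hNpos : (0 : ℝ) < (N : ℝ) := by exact_mod_cast hN
  -- slope limit : (1 - exp(-(κ x)))/x → κ
  have hslope : Filter.Tendsto (fun x : ℝ => (1 - Real.exp (-(κ * x))) / x)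
      (nhdsWithin 0 (Set.Ioi 0)) (nhds κ) := by
    have h := hasDerivAt_iff_tendsto_slope.mp (hasDerivAt_inner κ 0)
    rw [show κ * Real.exp (-(κ * 0)) = κ by simp] at h
    have hmono : nhdsWithin (0:ℝ) (Set.Ioi 0) ≤ nhdsWithin 0 {(0:ℝ)}ᶜ :=
      nhdsWithin_mono 0 (fun x hx => ne_of_gt hx)
    refine (h.mono_left hmono).congr' ?_
    filter_upwards [self_mem_nhdsWithin] with x (hx : (0:ℝ) < x)
    rw [slope_def_field]
    simp
  have hratio : Filter.Tendsto (fun x : ℝ => x / (1 - Real.exp (-(κ * x))))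
      (nhdsWithin 0 (Set.Ioi 0)) (nhds κ⁻¹) := by
    have := hslope.inv₀ (ne_of_gt hκ)
    refine this.congr' ?_
    filter_upwards with x
    rw [← one_div, one_div_div]
  have hlograt : Filter.Tendsto
      (fun x : ℝ => Real.log (x / (1 - Real.exp (-(κ * x)))))
      (nhdsWithin 0 (Set.Ioi 0)) (nhds (Real.log κ⁻¹)) :=
    (Real.continuousAt_log (inv_ne_zero (ne_of_gt hκ))).tendsto.comp hratio
  have hlin : Filter.Tendsto (fun x : ℝ => (κ - 1) * x)
      (nhdsWithin 0 (Set.Ioi 0)) (nhds 0) := by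
    have := ((continuous_const.mul continuous_id).tendsto (0:ℝ) :
      Filter.Tendsto (fun x : ℝ => (κ - 1) * x) _ _)
    simpa [Pi.mul_def] using this.mono_left nhdsWithin_le_nhds
  have hmain := (((hlograt.const_mul (((N - 1 : ℕ) : ℝ))).add hlin).sub
    (tendsto_const_nhds (x := Real.log ((N - 1).factorial) + Real.log ((N : ℝ) * κ))))
  -- the limit value is 0
  have hval : ((N - 1 : ℕ) : ℝ) * Real.log κ⁻¹ + 0 -
      (Real.log ((N - 1).factorial) + Real.log ((N : ℝ) * κ)) = 0 := by
    have hfac0 : ((N - 1).factorial : ℝ) ≠ 0 := by positivity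
    have hlogfac : Real.log (N.factorial : ℝ) + (N : ℝ) * Real.log κ = 0 := by
      have := congrArg Real.log hκN
      rwa [Real.log_mul (by positivity) (pow_ne_zero _ (ne_of_gt hκ)), Real.log_pow,
        Real.log_one] at this
    have hNfac : Real.log (N.factorial : ℝ) =
        Real.log (N : ℝ) + Real.log ((N - 1).factorial : ℝ) := by
      have h1 : ((N : ℝ) * ((N - 1).factorial : ℝ)) = (N.factorial : ℝ) := by
        exact_mod_cast Nat.mul_factorial_pred hN.ne'
      rw [← h1, Real.log_mul (ne_of_gt hNpos) hfac0]
    have hc : ((N - 1 : ℕ) : ℝ) = (N : ℝ) - 1 := by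
      push_cast [Nat.cast_sub hN]; ring
    rw [Real.log_inv, Real.log_mul (ne_of_gt hNpos) (ne_of_gt hκ), hc]
    nlinarith [hlogfac, hNfac]
  rw [hval] at hmain
  refine hmain.congr' ?_
  filter_upwards [self_mem_nhdsWithin] with x (hx : (0:ℝ) < x)
  have h1e : (1 : ℝ) - Real.exp (-(κ * x)) ≠ 0 := ne_of_gt (one_sub_exp_pos hκ hx)
  rw [Real.log_div (ne_of_gt hx) h1e, S]
  ring

lemma hasDerivAt_W (hκ : 0 < κ) {x : ℝ} (hx : 0 < x) : HasDerivAt (W κ) (W' κ x) x := by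
  have hE1 : Real.exp (κ * x) - 1 ≠ 0 := ne_of_gt (sub_pos.mpr (one_lt_exp' hκ hx))
  have h1 : HasDerivAt (fun y : ℝ => y⁻¹) (-(x ^ 2)⁻¹) x := by
    simpa using hasDerivAt_inv hx.ne'
  have hkx : HasDerivAt (fun y : ℝ => κ * y) κ x := by
    simpa using (hasDerivAt_id x).const_mul κ
  have hE : HasDerivAt (fun y : ℝ => Real.exp (κ * y) - 1) (Real.exp (κ * x) * κ) x :=
    hkx.exp.sub_const 1
  have hinv := (hE.inv hE1).const_mul κ
  have final := h1.sub hinv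
  unfold W W'
  refine final.congr_deriv ?_
  field_simp
  ring

lemma sq_exp_le {u : ℝ} (hu : 0 < u) : u ^ 2 * Real.exp u ≤ (Real.exp u - 1) ^ 2 := by
  have hs : u / 2 ≤ Real.sinh (u / 2) := Real.self_le_sinh_iff.mpr (by positivity)
  rw [Real.sinh_eq] at hs
  have he : Real.exp (u / 2) * Real.exp (u / 2) = Real.exp u := by
    rw [← Real.exp_add]; ring_nf
  have he2 : Real.exp (-(u / 2)) * Real.exp (u / 2) = 1 := by
    rw [← Real.exp_add]; simp
  have hp : (0 : ℝ) < Real.exp (u / 2) := Real.exp_pos _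
  have key : u * Real.exp (u / 2) ≤ Real.exp u - 1 := by nlinarith
  have h0 : (0 : ℝ) ≤ u * Real.exp (u / 2) := by positivity
  nlinarith [mul_self_le_mul_self h0 key]

lemma W'_nonpos (hκ : 0 < κ) {x : ℝ} (hx : 0 < x) : W' κ x ≤ 0 := by
  have hE1 : (0 : ℝ) < Real.exp (κ * x) - 1 := sub_pos.mpr (one_lt_exp' hκ hx)
  have key := sq_exp_le (show (0:ℝ) < κ * x by positivity)
  have goal' : κ ^ 2 * Real.exp (κ * x) / (Real.exp (κ * x) - 1) ^ 2 ≤ (x ^ 2)⁻¹ := by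
    rw [div_le_iff₀ (by positivity), inv_mul_eq_div, le_div_iff₀ (by positivity)]
    nlinarith [key]
  have heq : W' κ x = -(x ^ 2)⁻¹ + κ ^ 2 * Real.exp (κ * x) / (Real.exp (κ * x) - 1) ^ 2 := by
    unfold W'; ring
  linarith [heq.le, heq.ge]

lemma W_antitone (hκ : 0 < κ) {p q : ℝ} (hp : 0 < p) (hpq : p < q) : W κ q ≤ W κ p := by
  obtain ⟨c, hc, hceq⟩ := exists_hasDerivAt_eq_slope (W κ) (W' κ) hpq
    (fun x hx => (hasDerivAt_W hκ (lt_of_lt_of_le hp hx.1)).continuousAt.continuousWithinAt)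
    (fun x hx => hasDerivAt_W hκ (lt_trans hp hx.1))
  have h1 : W' κ c ≤ 0 := W'_nonpos hκ (lt_trans hp hc.1)
  rw [hceq, div_nonpos_iff] at h1
  rcases h1 with ⟨h, _⟩ | ⟨h, h2⟩
  · linarith
  · linarith

lemma T_antitone (hκ : 0 < κ) {p q : ℝ} (hp : 0 < p) (hpq : p < q) : T N κ q ≤ T N κ p := by
  have := W_antitone hκ hp hpq
  unfold T W at *
  have hc : (0:ℝ) ≤ ((N - 1 : ℕ) : ℝ) := Nat.cast_nonneg _
  nlinarith

/-- Key sign propagation: if `S` is nonneg somewhere, it is nonneg before. -/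
lemma S_nonneg_before (hN : 0 < N) (hκ : 0 < κ) (hκN : (N.factorial : ℝ) * κ ^ N = 1)
    {b z : ℝ} (hb : 0 < b) (hbz : b < z) (hz : 0 ≤ S N κ z) : 0 ≤ S N κ b := by
  by_contra hcon
  push_neg at hcon
  -- find ε ∈ (0, b) with S ε > S b
  have hev : ∀ᶠ x in nhdsWithin 0 (Set.Ioi 0), S N κ x > S N κ b := by
    have := tendsto_S_zero hN hκ hκN
    exact this.eventually (eventually_gt_nhds hcon)
  have hev2 : ∀ᶠ x in nhdsWithin 0 (Set.Ioi 0), x ∈ Set.Ioo (0:ℝ) b :=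
    Ioo_mem_nhdsGT_of_mem ⟨le_refl _, hb⟩
  obtain ⟨ε, hε1, hε2⟩ := (hev.and hev2).exists
  have hεb : ε < b := hε2.2
  have hε0 : 0 < ε := hε2.1
  have hcont : ∀ x : ℝ, 0 < x → ContinuousAt (S N κ) x :=
    fun x hx => (hasDerivAt_S hN hκ hx).continuousAt
  obtain ⟨c₁, hc₁, hc₁eq⟩ := exists_hasDerivAt_eq_slope (S N κ) (T N κ) hεb
    (fun x hx => (hcont x (lt_of_lt_of_le hε0 hx.1)).continuousWithinAt)
    (fun x hx => hasDerivAt_S hN hκ (lt_trans hε0 hx.1))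
  obtain ⟨c₂, hc₂, hc₂eq⟩ := exists_hasDerivAt_eq_slope (S N κ) (T N κ) hbz
    (fun x hx => (hcont x (lt_of_lt_of_le hb hx.1)).continuousWithinAt)
    (fun x hx => hasDerivAt_S hN hκ (lt_trans hb hx.1))
  have h1 : T N κ c₁ < 0 := by
    rw [hc₁eq]
    apply div_neg_of_neg_of_pos <;> [linarith [hε1]; linarith [hc₁.1, hc₁.2]]
  have h2 : 0 < T N κ c₂ := by
    rw [hc₂eq]
    apply div_pos <;> [linarith; linarith [hc₂.1, hc₂.2]]
  have := T_antitone (N := N) hκ (lt_trans hε0 hc₁.1) (lt_trans hc₁.2 hc₂.1)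
  linarith

lemma A_nonneg (N : ℕ) {t : ℝ} (ht : 0 ≤ t) : 0 ≤ A N t := by
  unfold A
  exact div_nonneg (mul_nonneg (pow_nonneg ht _) (Real.exp_pos _).le) (Nat.cast_nonneg _)

lemma F_eq_measure (hN : 0 < N) {x : ℝ} (hx : 0 ≤ x) :
    gammaMeasure (N : ℝ) 1 (Set.Iic x) = ENNReal.ofReal (F N x) := by
  obtain ⟨M, rfl⟩ : ∃ M, N = M + 1 := ⟨N - 1, (Nat.succ_pred_eq_of_pos hN).symm⟩
  rw [gammaMeasure, withDensity_apply _ measurableSet_Iic,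
    lintegral_Iic_eq_lintegral_Iio_add_Icc _ hx, lintegral_gammaPDF_of_nonpos le_rfl, zero_add]
  have hpdf : ∀ t ∈ Set.Icc (0:ℝ) x,
      gammaPDF ((M + 1 : ℕ) : ℝ) 1 t = ENNReal.ofReal (A (M + 1) t) := by
    intro t ht
    rw [gammaPDF_of_nonneg ht.1]
    congr 1
    have h1 : ((M + 1 : ℕ) : ℝ) - 1 = ((M : ℕ) : ℝ) := by push_cast; ring
    have hΓ : Real.Gamma ((M + 1 : ℕ) : ℝ) = (M.factorial : ℝ) := by
      push_cast
      exact_mod_cast Real.Gamma_nat_eq_factorial M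
    rw [h1, Real.rpow_natCast, hΓ]
    unfold A
    simp only [Nat.add_sub_cancel, Real.one_rpow, one_mul, Real.rpow_natCast]
    ring
  rw [setLIntegral_congr_fun measurableSet_Icc hpdf]
  have hint : MeasureTheory.Integrable (A (M + 1))
      (MeasureTheory.volume.restrict (Set.Icc 0 x)) :=
    ((contA (M + 1)).continuousOn).integrableOn_Icc
  have hnn : 0 ≤ᵐ[MeasureTheory.volume.restrict (Set.Icc 0 x)] A (M + 1) := by
    filter_upwards [MeasureTheory.ae_restrict_mem measurableSet_Icc] with t ht
    exact A_nonneg _ ht.1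
  rw [← MeasureTheory.ofReal_integral_eq_lintegral_ofReal hint hnn]
  congr 1
  rw [MeasureTheory.integral_Icc_eq_integral_Ioc, ← intervalIntegral.integral_of_le hx]
  rfl

lemma F_nonneg (N : ℕ) {x : ℝ} (hx : 0 ≤ x) : 0 ≤ F N x :=
  intervalIntegral.integral_nonneg hx (fun u hu => A_nonneg N hu.1)

lemma tendsto_F_atTop (hN : 0 < N) : Filter.Tendsto (F N) Filter.atTop (nhds 1) := by
  have hprob : IsProbabilityMeasure (gammaMeasure (N : ℝ) 1) :=
    isProbabilityMeasure_gammaMeasure (by exact_mod_cast hN) one_pos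
  have h1 : Filter.Tendsto (fun x => gammaMeasure (N : ℝ) 1 (Set.Iic x))
      Filter.atTop (nhds 1) := by
    simpa [measure_univ] using tendsto_measure_Iic_atTop (gammaMeasure (N : ℝ) 1)
  have h2 := (ENNReal.tendsto_toReal (by simp : (1 : ENNReal) ≠ ⊤)).comp h1
  simp only [ENNReal.toReal_one] at h2
  refine h2.congr' ?_
  filter_upwards [Filter.eventually_ge_atTop (0:ℝ)] with x hx
  simp only [Function.comp]
  rw [F_eq_measure hN hx, ENNReal.toReal_ofReal (F_nonneg N hx)]

lemma tendsto_H_atTop (hN : 0 < N) (hκ : 0 < κ) :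
    Filter.Tendsto (H N κ) Filter.atTop (nhds 1) := by
  have h0 : Filter.Tendsto (fun x : ℝ => κ * x) Filter.atTop Filter.atTop :=
    Filter.Tendsto.const_mul_atTop hκ Filter.tendsto_id
  have h1 : Filter.Tendsto (fun x : ℝ => -(κ * x)) Filter.atTop Filter.atBot :=
    Filter.tendsto_neg_atBot_iff.mpr h0
  have h2 : Filter.Tendsto (fun x : ℝ => Real.exp (-(κ * x))) Filter.atTop (nhds 0) :=
    Real.tendsto_exp_atBot.comp h1
  have h3 := ((tendsto_const_nhds (x := (1:ℝ)) (f := Filter.atTop)).sub h2).pow N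
  show Filter.Tendsto (fun x => (1 - Real.exp (-(κ * x))) ^ N) _ _
  simpa using h3

/-- Main real inequality. -/
lemma H_le_F (hN : 0 < N) (hκ : 0 < κ) (hκ1 : κ ≤ 1)
    (hκN : (N.factorial : ℝ) * κ ^ N = 1) {y : ℝ} (hy : 0 ≤ y) : H N κ y ≤ F N y := by
  set g : ℝ → ℝ := fun x => F N x - H N κ x with hgdef
  have hg' : ∀ x, HasDerivAt g (A N x - B N κ x) x :=
    fun x => (hasDerivAt_F N x).sub (hasDerivAt_H N κ x)
  have hgc : Continuous g := by
    have : Differentiable ℝ g := fun x => (hg' x).differentiableAt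
    exact this.continuous
  have hg0 : g 0 = 0 := by
    simp [hgdef, F, H, intervalIntegral.integral_same, zero_pow hN.ne']
  have hsub : 0 ≤ g y := by
    by_cases hcase : ∃ z, y ≤ z ∧ 0 ≤ S N κ z
    · obtain ⟨z, hyz, hz⟩ := hcase
      have hmono : MonotoneOn g (Set.Icc 0 y) := by
        apply monotoneOn_of_deriv_nonneg (convex_Icc 0 y) hgc.continuousOn
        · exact fun x _ => ((hg' x).differentiableAt).differentiableWithinAt
        · intro x hx
          rw [interior_Icc] at hx
          rw [(hg' x).deriv, sub_nonneg]
          refine B_le_A_of_S hN hκ hx.1 ?_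
          exact S_nonneg_before hN hκ hκN hx.1 (lt_of_lt_of_le hx.2 hyz) hz
      have := hmono (Set.left_mem_Icc.mpr hy) (Set.right_mem_Icc.mpr hy) hy
      linarith [hg0]
    · push_neg at hcase
      have hanti : AntitoneOn g (Set.Ici y) := by
        apply antitoneOn_of_deriv_nonpos (convex_Ici y) hgc.continuousOn
        · exact fun x _ => ((hg' x).differentiableAt).differentiableWithinAt
        · intro x hx
          rw [interior_Ici] at hx
          rw [(hg' x).deriv, sub_nonpos]
          exact A_le_B_of_S hN hκ (lt_of_le_of_lt hy hx) (hcase x hx.le).le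
      have hlim : Filter.Tendsto g Filter.atTop (nhds 0) := by
        have := (tendsto_F_atTop hN).sub (tendsto_H_atTop hN hκ)
        simpa using this
      refine le_of_tendsto hlim ?_
      filter_upwards [Filter.eventually_ge_atTop y] with z hz
      exact hanti (Set.mem_Ici.mpr le_rfl) (Set.mem_Ici.mpr hz) hz
  simp only [hgdef] at hsub
  linarith


end

end Stmt13Aux

/-- Alzer-type lower bound on the gamma cdf: for `G ∼ gamma(N, 1)` and
`κ = (N!)^(-1/N)`, `Pr(G ≤ y) ≥ (1 - exp (-κ y))^N` for every `y ≥ 0`. -/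
theorem stmt_13 {Ω : Type*} [MeasureSpace Ω] (P : Measure Ω) [IsProbabilityMeasure P]
    (N : ℕ) (hN : 0 < N) (G : Ω → ℝ) (hGmeas : Measurable G)
    (hG : Measure.map G P = gammaMeasure (N : ℝ) 1)
    (κ : ℝ) (hκ : κ = ((N.factorial : ℝ)) ^ (-(1 / (N : ℝ))))
    (y : ℝ) (hy : 0 ≤ y) :
    ENNReal.ofReal ((1 - Real.exp (-(κ * y))) ^ N) ≤ P {ω | G ω ≤ y} := by
  have hNfac : (1:ℝ) ≤ (N.factorial : ℝ) := by exact_mod_cast N.factorial_pos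
  have hκpos : 0 < κ := by
    rw [hκ]; positivity
  have hκ1 : κ ≤ 1 := by
    rw [hκ]
    apply Real.rpow_le_one_of_one_le_of_nonpos hNfac
    simp only [Left.neg_nonpos_iff]
    positivity
  have hκN : (N.factorial : ℝ) * κ ^ N = 1 := by
    rw [hκ, ← Real.rpow_natCast (((N.factorial : ℝ)) ^ (-(1 / (N : ℝ)))) N,
      ← Real.rpow_mul (by positivity)]
    rw [neg_mul, one_div, inv_mul_cancel₀ (by exact_mod_cast hN.ne' : (N:ℝ) ≠ 0)]
    rw [Real.rpow_neg_one]
    field_simp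
  have hset : {ω | G ω ≤ y} = G ⁻¹' (Set.Iic y) := rfl
  rw [hset, ← Measure.map_apply hGmeas measurableSet_Iic, hG,
    Stmt13Aux.F_eq_measure hN hy]
  exact ENNReal.ofReal_le_ofReal (Stmt13Aux.H_le_F hN hκpos hκ1 hκN hy)
end

section
/- Let N be a positive integer, κ = (N!)^{−1/N}, let G be gamma distributed with shape N and rate 1, let W be a nonnegative random variable independent of G, and let s ≥ 0. Then Pr(G ≥ sW) ≤ Σ_{n=1}^{N} C(N, n) (−1)^{n+1} E[exp(−nκsW)], where C(N, n) denotes the binomial coefficient. -/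
open MeasureTheory ProbabilityTheory

namespace Stmt14Aux

open Real Set Filter Topology


noncomputable def S (N : ℕ) (x : ℝ) : ℝ := ∑ k ∈ Finset.range N, x^k / k.factorial
noncomputable def F (N : ℕ) (x : ℝ) : ℝ := 1 - Real.exp (-x) * S N x
noncomputable def pp (N : ℕ) (x : ℝ) : ℝ := Real.exp (-x) * x^(N-1) / (N-1).factorial
noncomputable def qq (N : ℕ) (b x : ℝ) : ℝ :=
  (N : ℝ) * b * Real.exp (-(b*x)) * (1 - Real.exp (-(b*x)))^(N-1)
noncomputable def f (N : ℕ) (b x : ℝ) : ℝ := F N x - (1 - Real.exp (-(b*x)))^N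

lemma expE (b x : ℝ) : HasDerivAt (fun x => Real.exp (-(b*x))) (-b * Real.exp (-(b*x))) x := by
  have := (((hasDerivAt_id x).const_mul b).neg).exp
  convert this using 1 <;> simp [id] <;> ring

lemma oneSubExpE (b x : ℝ) :
    HasDerivAt (fun x => 1 - Real.exp (-(b*x))) (b * Real.exp (-(b*x))) x := by
  have := (expE b x).const_sub 1
  exact this.congr_deriv (by ring)

lemma sum_id (N : ℕ) (hN : 0 < N) (x : ℝ) :
    ∑ k ∈ Finset.range N, ((k : ℝ) * x^(k-1)) / k.factorial
      = S N x - x^(N-1) / ((N-1).factorial : ℝ) := by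
  obtain ⟨m, rfl⟩ : ∃ m, N = m + 1 := ⟨N - 1, (Nat.succ_pred_eq_of_pos hN).symm⟩
  rw [Finset.sum_range_succ' (fun k => ((k : ℝ) * x^(k-1)) / k.factorial)]
  simp only [S, Finset.sum_range_succ, Nat.add_sub_cancel]
  have : ∀ i : ℕ, (((i+1 : ℕ) : ℝ) * x^i) / (i+1).factorial = x^i / i.factorial := by
    intro i
    rw [Nat.factorial_succ]
    push_cast
    have hi : ((i:ℝ)+1) ≠ 0 := by positivity
    field_simp
  rw [Finset.sum_congr rfl (fun i _ => this i)]
  ring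

lemma hasDerivAt_S (N : ℕ) (x : ℝ) :
    HasDerivAt (S N) (∑ k ∈ Finset.range N, ((k : ℝ) * x^(k-1)) / k.factorial) x := by
  apply HasDerivAt.fun_sum
  intro k _
  exact (hasDerivAt_pow k x).div_const _

lemma hasDerivAt_F (N : ℕ) (hN : 0 < N) (x : ℝ) : HasDerivAt (F N) (pp N x) x := by
  have hS := hasDerivAt_S N x
  have he : HasDerivAt (fun x : ℝ => Real.exp (-x)) (-Real.exp (-x)) x := by
    have := (hasDerivAt_id x).neg.exp
    convert this using 1 <;> simp [id]
  have := ((he.mul hS).const_sub 1)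
  refine this.congr_deriv ?_
  rw [sum_id N hN x]
  unfold pp
  ring

lemma hasDerivAt_B (N : ℕ) (b x : ℝ) :
    HasDerivAt (fun x => (1 - Real.exp (-(b*x)))^N) (qq N b x) x := by
  have := (oneSubExpE b x).pow N
  refine this.congr_deriv ?_
  unfold qq
  ring

lemma hasDerivAt_f (N : ℕ) (hN : 0 < N) (b x : ℝ) :
    HasDerivAt (f N b) (pp N x - qq N b x) x :=
  (hasDerivAt_F N hN x).sub (hasDerivAt_B N b x)


noncomputable def h (N : ℕ) (b x : ℝ) : ℝ :=
  (-x + ((N:ℝ)-1) * Real.log x - Real.log ((N-1).factorial)) -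
    (Real.log ((N:ℝ)*b) - b*x + ((N:ℝ)-1) * Real.log (1 - Real.exp (-(b*x))))

noncomputable def h' (N : ℕ) (b x : ℝ) : ℝ :=
  (-1 + ((N:ℝ)-1) * x⁻¹) -
    (-b + ((N:ℝ)-1) * (b * Real.exp (-(b*x)) / (1 - Real.exp (-(b*x)))))

noncomputable def h'' (N : ℕ) (b x : ℝ) : ℝ :=
  ((N:ℝ)-1) * (b^2 * Real.exp (-(b*x)) / (1 - Real.exp (-(b*x)))^2 - (x^2)⁻¹)

lemma oneSubExp_pos {b x : ℝ} (hb : 0 < b) (hx : 0 < x) : 0 < 1 - Real.exp (-(b*x)) := by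
  have : Real.exp (-(b*x)) < 1 := Real.exp_lt_one_iff.mpr (by nlinarith)
  linarith

lemma pp_pos (N : ℕ) {x : ℝ} (hx : 0 < x) : 0 < pp N x := by
  unfold pp
  positivity

lemma qq_pos (N : ℕ) (hN : 0 < N) {b x : ℝ} (hb : 0 < b) (hx : 0 < x) : 0 < qq N b x := by
  have h1 := oneSubExp_pos hb hx
  have h2 : (0:ℝ) < N := by exact_mod_cast hN
  unfold qq
  positivity

lemma h_eq_log (N : ℕ) (hN : 0 < N) {b x : ℝ} (hb : 0 < b) (hx : 0 < x) :
    h N b x = Real.log (pp N x) - Real.log (qq N b x) := by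
  have h1 := oneSubExp_pos hb hx
  have hNR : (0:ℝ) < N := by exact_mod_cast hN
  have hcast : (((N-1 : ℕ)) : ℝ) = (N:ℝ) - 1 := by
    rw [Nat.cast_sub hN, Nat.cast_one]
  have hlogp : Real.log (pp N x) = -x + ((N:ℝ)-1) * Real.log x - Real.log ((N-1).factorial) := by
    unfold pp
    rw [Real.log_div (by positivity) (by positivity), Real.log_mul (Real.exp_ne_zero _)
      (by positivity), Real.log_exp, Real.log_pow, hcast]
  have hlogq : Real.log (qq N b x) =
      Real.log ((N:ℝ)*b) - b*x + ((N:ℝ)-1) * Real.log (1 - Real.exp (-(b*x))) := by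
    unfold qq
    rw [Real.log_mul (by positivity) (by positivity), Real.log_mul (by positivity)
      (Real.exp_ne_zero _), Real.log_exp, Real.log_pow, hcast]
    ring
  rw [hlogp, hlogq]
  rfl


lemma qq_le_pp (N : ℕ) (hN : 0 < N) {b x : ℝ} (hb : 0 < b) (hx : 0 < x)
    (hh : 0 ≤ h N b x) : qq N b x ≤ pp N x := by
  have := h_eq_log N hN hb hx
  rw [this, sub_nonneg] at hh
  exact (Real.log_le_log_iff (qq_pos N hN hb hx) (pp_pos N hx)).mp hh

lemma pp_le_qq (N : ℕ) (hN : 0 < N) {b x : ℝ} (hb : 0 < b) (hx : 0 < x)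
    (hh : h N b x ≤ 0) : pp N x ≤ qq N b x := by
  have := h_eq_log N hN hb hx
  rw [this, sub_nonpos] at hh
  exact (Real.log_le_log_iff (pp_pos N hx) (qq_pos N hN hb hx)).mp hh

lemma hasDerivAt_h (N : ℕ) {b x : ℝ} (hb : 0 < b) (hx : 0 < x) :
    HasDerivAt (h N b) (h' N b x) x := by
  have h1 := oneSubExp_pos hb hx
  have d1 : HasDerivAt (fun x : ℝ => Real.log x) x⁻¹ x := Real.hasDerivAt_log (ne_of_gt hx)
  have d2 : HasDerivAt (fun x : ℝ => Real.log (1 - Real.exp (-(b*x))))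
      (b * Real.exp (-(b*x)) / (1 - Real.exp (-(b*x)))) x :=
    (oneSubExpE b x).log (ne_of_gt h1)
  have d3 : HasDerivAt (fun x : ℝ => -x + ((N:ℝ)-1) * Real.log x - Real.log ((N-1).factorial))
      (-1 + ((N:ℝ)-1) * x⁻¹) x := by
    exact (((hasDerivAt_id x).neg).add (d1.const_mul _)).sub_const _
  have d4 : HasDerivAt (fun x : ℝ => Real.log ((N:ℝ)*b) - b*x +
      ((N:ℝ)-1) * Real.log (1 - Real.exp (-(b*x))))
      (-b + ((N:ℝ)-1) * (b * Real.exp (-(b*x)) / (1 - Real.exp (-(b*x))))) x := by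
    have d0 : HasDerivAt (fun y : ℝ => b * y) b x := by
      simpa using (hasDerivAt_id x).const_mul b
    exact (d0.const_sub (Real.log ((N:ℝ)*b))).add (d2.const_mul _)
  exact d3.sub d4

lemma hasDerivAt_h' (N : ℕ) {b x : ℝ} (hb : 0 < b) (hx : 0 < x) :
    HasDerivAt (h' N b) (h'' N b x) x := by
  have h1 := oneSubExp_pos hb hx
  have dinv : HasDerivAt (fun x : ℝ => x⁻¹) (-(x^2)⁻¹) x := by
    simpa using hasDerivAt_inv (ne_of_gt hx)
  have dnum : HasDerivAt (fun x : ℝ => b * Real.exp (-(b*x)))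
      (b * (-b * Real.exp (-(b*x)))) x := (expE b x).const_mul b
  have dq : HasDerivAt (fun x : ℝ => b * Real.exp (-(b*x)) / (1 - Real.exp (-(b*x))))
      ((b * (-b * Real.exp (-(b*x))) * (1 - Real.exp (-(b*x))) -
        b * Real.exp (-(b*x)) * (b * Real.exp (-(b*x)))) / (1 - Real.exp (-(b*x)))^2) x :=
    dnum.div (oneSubExpE b x) (ne_of_gt h1)
  have d3 : HasDerivAt (fun x : ℝ => -1 + ((N:ℝ)-1) * x⁻¹) (((N:ℝ)-1) * -(x^2)⁻¹) x :=
    (dinv.const_mul _).const_add _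
  have d4 := ((dq.const_mul ((N:ℝ)-1)).const_add (-b))
  have := d3.sub d4
  refine this.congr_deriv ?_
  unfold h''
  have he : Real.exp (-(b*x)) ≠ 0 := Real.exp_ne_zero _
  field_simp
  ring

lemma h''_nonpos (N : ℕ) (hN : 0 < N) {b x : ℝ} (hb : 0 < b) (hx : 0 < x) : h'' N b x ≤ 0 := by
  have h1 := oneSubExp_pos hb hx
  have hN1 : (0:ℝ) ≤ (N:ℝ) - 1 ∨ (N:ℝ) - 1 ≤ 0 := le_or_gt 0 ((N:ℝ)-1) |>.imp id le_of_lt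
  -- core inequality : b*x*exp(-(b*x)/2) ≤ 1 - exp(-(b*x))
  have hu : 0 < b * x := mul_pos hb hx
  have core : b * x * Real.exp (-(b*x)/2) ≤ 1 - Real.exp (-(b*x)) := by
    have hs : b*x/2 < Real.sinh (b*x/2) := Real.self_lt_sinh_iff.mpr (by linarith)
    rw [Real.sinh_eq] at hs
    rw [show (-(b*x/2)) = -(b*x)/2 by ring] at hs
    have hmul := mul_le_mul_of_nonneg_right (le_of_lt hs)
      (le_of_lt (Real.exp_pos (-(b*x)/2)))
    calc b * x * Real.exp (-(b*x)/2)
        = (b*x/2) * Real.exp (-(b*x)/2) * 2 := by ring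
      _ ≤ (Real.exp (b*x/2) - Real.exp (-(b*x)/2)) / 2 * Real.exp (-(b*x)/2) * 2 := by nlinarith
      _ = Real.exp (b*x/2) * Real.exp (-(b*x)/2) - Real.exp (-(b*x)/2) * Real.exp (-(b*x)/2) := by
          ring
      _ = 1 - Real.exp (-(b*x)) := by
          rw [← Real.exp_add, ← Real.exp_add,
            show b*x/2 + -(b*x)/2 = 0 by ring, show -(b*x)/2 + -(b*x)/2 = -(b*x) by ring,
            Real.exp_zero]
  have sq : b^2 * x^2 * Real.exp (-(b*x)) ≤ (1 - Real.exp (-(b*x)))^2 := by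
    have h0 : 0 ≤ b * x * Real.exp (-(b*x)/2) := by positivity
    have := mul_self_le_mul_self h0 core
    calc b^2 * x^2 * Real.exp (-(b*x))
        = (b * x * Real.exp (-(b*x)/2)) * (b * x * Real.exp (-(b*x)/2)) := by
          rw [show Real.exp (-(b*x)) = Real.exp (-(b*x)/2) * Real.exp (-(b*x)/2) by
            rw [← Real.exp_add]; ring_nf]
          ring
      _ ≤ (1 - Real.exp (-(b*x))) * (1 - Real.exp (-(b*x))) := this
      _ = (1 - Real.exp (-(b*x)))^2 := by ring
  have key : b^2 * Real.exp (-(b*x)) / (1 - Real.exp (-(b*x)))^2 - (x^2)⁻¹ ≤ 0 := by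
    rw [sub_nonpos, div_le_iff₀ (by positivity), inv_mul_eq_div, le_div_iff₀ (by positivity)]
    nlinarith [sq]
  unfold h''
  have : (1:ℝ) ≤ (N:ℝ) := by exact_mod_cast hN
  nlinarith [key]


lemma antitone_h' (N : ℕ) (hN : 0 < N) {b : ℝ} (hb : 0 < b) :
    AntitoneOn (h' N b) (Ioi 0) := by
  apply antitoneOn_of_deriv_nonpos (convex_Ioi 0)
  · intro x hx
    exact (hasDerivAt_h' N hb hx).continuousAt.continuousWithinAt
  · intro x hx
    rw [interior_Ioi] at hx
    exact (hasDerivAt_h' N hb hx).differentiableAt.differentiableWithinAt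
  · intro x hx
    rw [interior_Ioi] at hx
    rw [(hasDerivAt_h' N hb hx).deriv]
    exact h''_nonpos N hN hb hx

lemma concave_h (N : ℕ) (hN : 0 < N) {b : ℝ} (hb : 0 < b) :
    ConcaveOn ℝ (Ioi 0) (h N b) := by
  apply AntitoneOn.concaveOn_of_deriv (convex_Ioi 0)
  · intro x hx
    exact (hasDerivAt_h N hb hx).continuousAt.continuousWithinAt
  · intro x hx
    rw [interior_Ioi] at hx
    exact (hasDerivAt_h N hb hx).differentiableAt.differentiableWithinAt
  · rw [interior_Ioi]
    intro x hx y hy hxy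
    rw [(hasDerivAt_h N hb hx).deriv, (hasDerivAt_h N hb hy).deriv]
    exact antitone_h' N hN hb hx hy hxy

lemma tendsto_h_zero (N : ℕ) (hN : 0 < N) {b : ℝ} (hb : 0 < b)
    (hbN : b ^ N * (N.factorial : ℝ) = 1) :
    Tendsto (h N b) (𝓝[>] (0:ℝ)) (𝓝 0) := by
  -- slope limit
  have hslope : Tendsto (fun x => (1 - Real.exp (-(b*x)))/x) (𝓝[>] (0:ℝ)) (𝓝 b) := by
    have hd : HasDerivAt (fun x : ℝ => 1 - Real.exp (-(b*x))) b 0 := by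
      have := oneSubExpE b 0
      simpa using this
    have := hasDerivAt_iff_tendsto_slope.mp hd
    have h2 : Tendsto (slope (fun x : ℝ => 1 - Real.exp (-(b*x))) 0) (𝓝[>] (0:ℝ)) (𝓝 b) :=
      this.mono_left (nhdsWithin_mono 0 (fun y hy => ne_of_gt hy))
    apply h2.congr'
    filter_upwards [self_mem_nhdsWithin] with x (hx : 0 < x)
    rw [slope_def_field]
    simp [div_eq_iff (ne_of_gt hx)]
  have hloglim : Tendsto (fun x => Real.log ((1 - Real.exp (-(b*x)))/x)) (𝓝[>] (0:ℝ))
      (𝓝 (Real.log b)) :=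
    ((Real.continuousAt_log (ne_of_gt hb)).tendsto.comp hslope)
  have hxlim : Tendsto (fun x : ℝ => (b-1)*x) (𝓝[>] (0:ℝ)) (𝓝 0) := by
    have : Tendsto (fun x : ℝ => (b-1)*x) (𝓝 (0:ℝ)) (𝓝 ((b-1)*0)) :=
      (continuous_const.mul continuous_id).tendsto 0
    simpa using this.mono_left nhdsWithin_le_nhds
  have heq : ∀ᶠ x in 𝓝[>] (0:ℝ), h N b x =
      -(((N:ℝ)-1) * Real.log ((1 - Real.exp (-(b*x)))/x)) + (b-1)*x -
        (Real.log ((N-1).factorial) + Real.log ((N:ℝ)*b)) := by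
    filter_upwards [self_mem_nhdsWithin] with x (hx : 0 < x)
    have h1 := oneSubExp_pos hb hx
    rw [Real.log_div (ne_of_gt h1) (ne_of_gt hx)]
    unfold h
    ring
  have hconst : -(((N:ℝ)-1) * Real.log b) + 0 -
      (Real.log ((N-1).factorial) + Real.log ((N:ℝ)*b)) = 0 := by
    have h2 : Real.log ((N:ℝ)*b) = Real.log (N:ℝ) + Real.log b :=
      Real.log_mul (by exact_mod_cast hN.ne') (ne_of_gt hb)
    have h3 : Real.log ((N-1).factorial : ℝ) + Real.log (N:ℝ) = Real.log (N.factorial : ℝ) := by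
      rw [← Real.log_mul (by positivity) (by exact_mod_cast hN.ne')]
      congr 1
      rw [← Nat.cast_mul]
      congr 1
      rw [mul_comm]
      exact Nat.mul_factorial_pred hN.ne'
    have h4 : Real.log (b^N) + Real.log (N.factorial:ℝ) = 0 := by
      rw [← Real.log_mul (by positivity) (by positivity), hbN, Real.log_one]
    have h5 : Real.log (b^N) = (N:ℝ) * Real.log b := by
      rw [Real.log_pow]
    linarith
  have htend := (((hloglim.const_mul (((N:ℝ)-1))).neg.add hxlim).sub_const
    (Real.log ((N-1).factorial) + Real.log ((N:ℝ)*b)))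
  rw [hconst] at htend
  exact Tendsto.congr' (EventuallyEq.symm (heq : (h N b) =ᶠ[𝓝[>] (0:ℝ)] _)) htend


lemma h_scale (N : ℕ) (hN : 0 < N) {b : ℝ} (hb : 0 < b)
    (hbN : b ^ N * (N.factorial : ℝ) = 1) {x₁ x₂ : ℝ} (h1 : 0 < x₁) (h12 : x₁ ≤ x₂) :
    (x₁/x₂) * h N b x₂ ≤ h N b x₁ := by
  rcases eq_or_lt_of_le h12 with rfl | hlt
  · rw [div_self (ne_of_gt h1), one_mul]
  have h2 : 0 < x₂ := lt_trans h1 hlt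
  have hconc := concave_h N hN hb
  have key : ∀ ε ∈ Ioo (0:ℝ) x₁,
      ((x₂-x₁)/(x₂-ε)) * h N b ε + ((x₁-ε)/(x₂-ε)) * h N b x₂ ≤ h N b x₁ := by
    intro ε hε
    obtain ⟨hε0, hεx⟩ := hε
    have hden : 0 < x₂ - ε := by linarith
    have ha : 0 ≤ (x₂-x₁)/(x₂-ε) := by
      apply div_nonneg _ (le_of_lt hden); linarith
    have hc : 0 ≤ (x₁-ε)/(x₂-ε) := by
      apply div_nonneg _ (le_of_lt hden); linarith
    have hsum : (x₂-x₁)/(x₂-ε) + (x₁-ε)/(x₂-ε) = 1 := by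
      field_simp
      ring
    have hcomb : ((x₂-x₁)/(x₂-ε)) • ε + ((x₁-ε)/(x₂-ε)) • x₂ = x₁ := by
      simp only [smul_eq_mul]
      field_simp
      ring
    have := hconc.2 (mem_Ioi.mpr hε0) (mem_Ioi.mpr h2) ha hc hsum
    rw [hcomb] at this
    simpa using this
  -- take limit ε → 0+
  have hlim := tendsto_h_zero N hN hb hbN
  have htend : Tendsto (fun ε => ((x₂-x₁)/(x₂-ε)) * h N b ε + ((x₁-ε)/(x₂-ε)) * h N b x₂)
      (𝓝[>] (0:ℝ)) (𝓝 ((x₂-x₁)/x₂ * 0 + (x₁/x₂) * h N b x₂)) := by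
    apply Tendsto.add
    · apply Tendsto.mul _ hlim
      have : Tendsto (fun ε : ℝ => (x₂-x₁)/(x₂-ε)) (𝓝 (0:ℝ)) (𝓝 ((x₂-x₁)/(x₂-0))) := by
        apply Tendsto.div tendsto_const_nhds
        · exact (continuous_const.sub continuous_id).tendsto 0
        · simpa using ne_of_gt h2
      simpa using this.mono_left nhdsWithin_le_nhds
    · apply Tendsto.mul_const
      have : Tendsto (fun ε : ℝ => (x₁-ε)/(x₂-ε)) (𝓝 (0:ℝ)) (𝓝 ((x₁-0)/(x₂-0))) := by
        apply Tendsto.div ((continuous_const.sub continuous_id).tendsto 0)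
          ((continuous_const.sub continuous_id).tendsto 0)
        simpa using ne_of_gt h2
      simpa using this.mono_left nhdsWithin_le_nhds
  have hle : (x₂-x₁)/x₂ * 0 + (x₁/x₂) * h N b x₂ ≤ h N b x₁ := by
    apply le_of_tendsto htend
    filter_upwards [Ioo_mem_nhdsGT h1] with ε hε
    exact key ε hε
  simpa using hle

lemma f_zero (N : ℕ) (hN : 0 < N) (b : ℝ) : f N b 0 = 0 := by
  unfold f F S
  have hS : ∑ k ∈ Finset.range N, (0:ℝ)^k / k.factorial = 1 := by
    rw [Finset.sum_eq_single 0]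
    · norm_num
    · intro k _ hk
      rw [zero_pow hk]
      norm_num
    · intro habs
      exact absurd (Finset.mem_range.mpr hN) habs
  rw [hS]
  simp [zero_pow hN.ne']

lemma tendsto_f_atTop (N : ℕ) {b : ℝ} (hb : 0 < b) :
    Tendsto (f N b) atTop (𝓝 0) := by
  have hF : Tendsto (F N) atTop (𝓝 1) := by
    have hES : Tendsto (fun x => Real.exp (-x) * S N x) atTop (𝓝 0) := by
      have : ∀ x : ℝ, Real.exp (-x) * S N x
          = ∑ k ∈ Finset.range N, (x^k * Real.exp (-x)) / k.factorial := by
        intro x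
        unfold S
        rw [Finset.mul_sum]
        apply Finset.sum_congr rfl
        intro k _
        ring
      simp only [this]
      have h0 : (0:ℝ) = ∑ k ∈ Finset.range N, (0:ℝ) / k.factorial := by simp
      rw [h0]
      apply tendsto_finset_sum
      intro k _
      have := tendsto_pow_mul_exp_neg_atTop_nhds_zero k
      simpa using this.div_const (k.factorial : ℝ)
    have := (tendsto_const_nhds (x := (1:ℝ)) (f := atTop)).sub hES
    simpa using (show Tendsto (F N) atTop (𝓝 (1-0)) from this)
  have hB : Tendsto (fun x => (1 - Real.exp (-(b*x)))^N) atTop (𝓝 1) := by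
    have he : Tendsto (fun x : ℝ => Real.exp (-(b*x))) atTop (𝓝 0) := by
      apply Real.tendsto_exp_atBot.comp
      have : Tendsto (fun x : ℝ => b * x) atTop atTop :=
        Tendsto.const_mul_atTop hb tendsto_id
      exact tendsto_neg_atBot_iff.mpr this
    have h1 : Tendsto (fun x : ℝ => 1 - Real.exp (-(b*x))) atTop (𝓝 1) := by
      have := (tendsto_const_nhds (x := (1:ℝ)) (f := atTop)).sub he
      simpa using this
    have := h1.pow N
    simpa using this
  have := hF.sub hB
  unfold f
  simpa using this


lemma f_nonneg (N : ℕ) (hN : 0 < N) {b : ℝ} (hb : 0 < b)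
    (hbN : b ^ N * (N.factorial : ℝ) = 1) {x : ℝ} (hx : 0 ≤ x) : 0 ≤ f N b x := by
  rcases eq_or_lt_of_le hx with rfl | hx0
  · rw [f_zero N hN b]
  by_cases hc : 0 ≤ h N b x
  · -- f monotone on [0, x]
    have hmono : MonotoneOn (f N b) (Icc 0 x) := by
      apply monotoneOn_of_deriv_nonneg (convex_Icc 0 x)
      · exact fun t _ => (hasDerivAt_f N hN b t).continuousAt.continuousWithinAt
      · intro t ht
        rw [interior_Icc] at ht
        exact (hasDerivAt_f N hN b t).differentiableAt.differentiableWithinAt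
      · intro t ht
        rw [interior_Icc] at ht
        obtain ⟨ht0, htx⟩ := ht
        rw [(hasDerivAt_f N hN b t).deriv, sub_nonneg]
        apply qq_le_pp N hN hb ht0
        have := h_scale N hN hb hbN ht0 (le_of_lt htx)
        have hcoef : 0 ≤ t/x := by positivity
        nlinarith
    have := hmono (left_mem_Icc.mpr hx) (right_mem_Icc.mpr hx) hx
    rwa [f_zero N hN b] at this
  · push_neg at hc
    have hanti : AntitoneOn (f N b) (Ici x) := by
      apply antitoneOn_of_deriv_nonpos (convex_Ici x)
      · exact fun t _ => (hasDerivAt_f N hN b t).continuousAt.continuousWithinAt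
      · intro t ht
        rw [interior_Ici] at ht
        exact (hasDerivAt_f N hN b t).differentiableAt.differentiableWithinAt
      · intro t ht
        rw [interior_Ici] at ht
        have htx : x < t := ht
        have ht0 : 0 < t := lt_trans hx0 htx
        rw [(hasDerivAt_f N hN b t).deriv, sub_nonpos]
        apply pp_le_qq N hN hb ht0
        by_contra habs
        push_neg at habs
        have := h_scale N hN hb hbN hx0 (le_of_lt htx)
        have hcoef : 0 < x/t := by positivity
        nlinarith
    apply le_of_tendsto (tendsto_f_atTop N hb)
    filter_upwards [eventually_ge_atTop x] with t ht
    exact hanti (mem_Ici.mpr (le_refl x)) (mem_Ici.mpr ht) ht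


lemma S_zero (N : ℕ) (hN : 0 < N) : S N 0 = 1 := by
  unfold S
  rw [Finset.sum_eq_single 0]
  · norm_num
  · intro k _ hk
    rw [zero_pow hk]
    norm_num
  · intro habs
    exact absurd (Finset.mem_range.mpr hN) habs

lemma F_zero (N : ℕ) (hN : 0 < N) : F N 0 = 0 := by
  unfold F
  rw [S_zero N hN]
  simp

lemma continuous_pp (N : ℕ) : Continuous (pp N) := by
  unfold pp
  exact ((Real.continuous_exp.comp continuous_neg).mul (continuous_pow _)).div_const _

lemma pdf_eq (N : ℕ) (hN : 0 < N) {x : ℝ} (hx : 0 ≤ x) :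
    gammaPDF (N:ℝ) 1 x = ENNReal.ofReal (pp N x) := by
  rw [gammaPDF_of_nonneg hx]
  congr 1
  have hcast : ((N:ℝ)) = ((N-1 : ℕ) : ℝ) + 1 := by
    rw [Nat.cast_sub hN]
    push_cast
    ring
  rw [Real.one_rpow, hcast, Real.Gamma_nat_eq_factorial,
    show ((N-1:ℕ):ℝ) + 1 - 1 = ((N-1:ℕ):ℝ) by ring, Real.rpow_natCast]
  unfold pp
  rw [one_mul]
  ring

lemma gamma_Iio (N : ℕ) (hN : 0 < N) {y : ℝ} (hy : 0 ≤ y) :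
    gammaMeasure (N:ℝ) 1 (Iio y) = ENNReal.ofReal (F N y) := by
  rw [gammaMeasure, withDensity_apply _ measurableSet_Iio,
    ← Iio_union_Ico_eq_Iio hy, lintegral_union measurableSet_Ico
      ((Set.Iio_disjoint_Ici le_rfl).mono_right Set.Ico_subset_Ici_self),
    lintegral_gammaPDF_of_nonpos le_rfl, zero_add]
  have h1 : ∫⁻ x in Ico 0 y, gammaPDF (N:ℝ) 1 x = ∫⁻ x in Ico 0 y, ENNReal.ofReal (pp N x) :=
    setLIntegral_congr_fun measurableSet_Ico (fun x hx => pdf_eq N hN hx.1)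
  rw [h1]
  have hint : IntegrableOn (pp N) (Ico 0 y) :=
    ((continuous_pp N).integrableOn_Icc).mono_set Ico_subset_Icc_self
  have hnn : 0 ≤ᵐ[volume.restrict (Ico 0 y)] pp N := by
    refine (ae_restrict_iff' measurableSet_Ico).mpr (ae_of_all _ fun x hx => ?_)
    have hx0 : 0 ≤ x := hx.1
    unfold pp
    positivity
  rw [← ofReal_integral_eq_lintegral_ofReal hint hnn]
  congr 1
  rw [MeasureTheory.integral_Ico_eq_integral_Ioo, ← MeasureTheory.integral_Ioc_eq_integral_Ioo,
    ← intervalIntegral.integral_of_le hy,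
    intervalIntegral.integral_eq_sub_of_hasDerivAt (fun t _ => hasDerivAt_F N hN t)
      ((continuous_pp N).intervalIntegrable 0 y), F_zero N hN, sub_zero]

lemma gamma_tail (N : ℕ) (hN : 0 < N) {b y : ℝ} (hb : 0 < b)
    (hbN : b ^ N * (N.factorial : ℝ) = 1) (hy : 0 ≤ y) :
    gammaMeasure (N:ℝ) 1 (Ici y) ≤ ENNReal.ofReal (1 - (1 - Real.exp (-(b*y)))^N) := by
  haveI : IsProbabilityMeasure (gammaMeasure (N:ℝ) 1) :=
    isProbabilityMeasure_gammaMeasure (by exact_mod_cast hN) one_pos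
  have hB0 : 0 ≤ (1 - Real.exp (-(b*y)))^N := by
    have : Real.exp (-(b*y)) ≤ 1 := Real.exp_le_one_iff.mpr (by nlinarith)
    exact pow_nonneg (by linarith) N
  have hBF : (1 - Real.exp (-(b*y)))^N ≤ F N y := by
    have := f_nonneg N hN hb hbN hy
    unfold f at this
    linarith
  have hIci : gammaMeasure (N:ℝ) 1 (Ici y) = 1 - ENNReal.ofReal (F N y) := by
    rw [show Ici y = (Iio y)ᶜ by rw [compl_Iio],
      measure_compl measurableSet_Iio (measure_ne_top _ _), measure_univ, gamma_Iio N hN hy]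
  rw [hIci, ENNReal.ofReal_sub _ hB0, ENNReal.ofReal_one]
  exact tsub_le_tsub_left (ENNReal.ofReal_le_ofReal hBF) 1


lemma binom (N : ℕ) (t : ℝ) :
    1 - (1-t)^N = ∑ n ∈ Finset.Icc 1 N, (N.choose n : ℝ) * (-1)^(n+1) * t^n := by
  have herase : Finset.Icc 1 N = (Finset.range (N+1)).erase 0 := by
    ext k
    simp only [Finset.mem_Icc, Finset.mem_erase, Finset.mem_range]
    omega
  have hpow : (1-t)^N = 1 + ∑ k ∈ (Finset.range (N+1)).erase 0, (-t)^k * (N.choose k : ℝ) := by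
    rw [show (1:ℝ)-t = -t+1 by ring, add_pow,
      ← Finset.add_sum_erase _ _ (show 0 ∈ Finset.range (N+1) by simp)]
    simp
  rw [hpow, herase]
  have hterm : ∀ k ∈ (Finset.range (N+1)).erase 0,
      (N.choose k : ℝ) * (-1)^(k+1) * t^k = -((-t)^k * (N.choose k : ℝ)) := by
    intro k _
    rw [neg_pow]
    ring
  rw [Finset.sum_congr rfl hterm, Finset.sum_neg_distrib]
  ring

end Stmt14Aux

/-- Approximation device of Theorems 2 and 3: for `G ∼ gamma(N, 1)` independent of a
nonnegative random variable `W`, `κ = (N!)^(-1/N)` and `s ≥ 0`,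
`Pr(G ≥ s W) ≤ ∑_{n=1}^{N} C(N,n) (-1)^{n+1} E[exp (-n κ s W)]`. -/
theorem stmt_14 {Ω : Type*} [MeasureSpace Ω] (P : Measure Ω) [IsProbabilityMeasure P]
    (N : ℕ) (hN : 0 < N) (G W : Ω → ℝ) (hGmeas : Measurable G) (hWmeas : Measurable W)
    (hWpos : ∀ ω, 0 ≤ W ω) (hG : Measure.map G P = gammaMeasure (N : ℝ) 1)
    (hindep : IndepFun G W P)
    (κ : ℝ) (hκ : κ = ((N.factorial : ℝ)) ^ (-(1 / (N : ℝ))))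
    (s : ℝ) (hs : 0 ≤ s) :
    P {ω | s * W ω ≤ G ω} ≤
      ENNReal.ofReal (∑ n ∈ Finset.Icc 1 N,
        (N.choose n : ℝ) * (-1 : ℝ) ^ (n + 1) *
          ∫ ω, Real.exp (-((n : ℝ) * κ * s * W ω)) ∂P) := by
  have hfac : (0:ℝ) < N.factorial := by exact_mod_cast N.factorial_pos
  have hb : 0 < κ := by
    rw [hκ]
    exact Real.rpow_pos_of_pos hfac _
  have hNR : ((N:ℝ)) ≠ 0 := by
    exact_mod_cast hN.ne'
  have hbN : κ ^ N * (N.factorial : ℝ) = 1 := by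
    rw [hκ, ← Real.rpow_natCast ((N.factorial : ℝ) ^ (-(1/(N:ℝ)))) N,
      ← Real.rpow_mul (le_of_lt hfac), show (-(1/(N:ℝ))) * (N:ℝ) = -1 by field_simp,
      Real.rpow_neg_one]
    field_simp
  haveI hPG : IsProbabilityMeasure (P.map G) := by
    rw [hG]
    exact isProbabilityMeasure_gammaMeasure (by exact_mod_cast hN) one_pos
  haveI hPW : IsProbabilityMeasure (P.map W) := Measure.isProbabilityMeasure_map hWmeas.aemeasurable
  have hmap : P.map (fun ω => (W ω, G ω)) = (P.map W).prod (P.map G) :=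
    (indepFun_iff_map_prod_eq_prod_map_map hWmeas.aemeasurable hGmeas.aemeasurable).mp
      hindep.symm
  have hset : MeasurableSet {p : ℝ × ℝ | s * p.1 ≤ p.2} :=
    measurableSet_le (measurable_fst.const_mul s) measurable_snd
  have step1 : P {ω | s * W ω ≤ G ω}
      = ((P.map W).prod (P.map G)) {p : ℝ × ℝ | s * p.1 ≤ p.2} := by
    rw [← hmap, Measure.map_apply (hWmeas.prodMk hGmeas) hset]
    rfl
  have step2 : ((P.map W).prod (P.map G)) {p : ℝ × ℝ | s * p.1 ≤ p.2}
      = ∫⁻ w, (P.map G) (Set.Ici (s*w)) ∂(P.map W) := by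
    rw [Measure.prod_apply hset]
    rfl
  have hae : ∀ᵐ w ∂(P.map W), 0 ≤ w := by
    rw [MeasureTheory.ae_map_iff hWmeas.aemeasurable
      (show MeasurableSet {w : ℝ | 0 ≤ w} from measurableSet_Ici)]
    exact ae_of_all _ hWpos
  have step3 : ∫⁻ w, (P.map G) (Set.Ici (s*w)) ∂(P.map W)
      ≤ ∫⁻ w, ENNReal.ofReal (1 - (1 - Real.exp (-(κ*(s*w))))^N) ∂(P.map W) := by
    apply lintegral_mono_ae
    filter_upwards [hae] with w hw
    rw [hG]
    exact Stmt14Aux.gamma_tail N hN hb hbN (by positivity)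
  have hψc : Continuous (fun w : ℝ => 1 - (1 - Real.exp (-(κ*(s*w))))^N) := by
    apply continuous_const.sub
    exact (continuous_const.sub
      (Real.continuous_exp.comp ((continuous_const.mul
        (continuous_const.mul continuous_id)).neg))).pow N
  have step4 : ∫⁻ w, ENNReal.ofReal (1 - (1 - Real.exp (-(κ*(s*w))))^N) ∂(P.map W)
      = ∫⁻ ω, ENNReal.ofReal (1 - (1 - Real.exp (-(κ*(s*W ω))))^N) ∂P :=
    lintegral_map (ENNReal.measurable_ofReal.comp hψc.measurable) hWmeas
  have hψ01 : ∀ ω, 0 ≤ 1 - (1 - Real.exp (-(κ*(s*W ω))))^N ∧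
      1 - (1 - Real.exp (-(κ*(s*W ω))))^N ≤ 1 := by
    intro ω
    have h0 : 0 ≤ κ * (s * W ω) := by
      have := hWpos ω
      positivity
    have he1 : Real.exp (-(κ*(s*W ω))) ≤ 1 := Real.exp_le_one_iff.mpr (by linarith)
    have he0 : 0 < Real.exp (-(κ*(s*W ω))) := Real.exp_pos _
    constructor
    · have : (1 - Real.exp (-(κ*(s*W ω))))^N ≤ 1 := pow_le_one₀ (by linarith) (by linarith)
      linarith
    · have : 0 ≤ (1 - Real.exp (-(κ*(s*W ω))))^N := pow_nonneg (by linarith) N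
      linarith
  have hint : Integrable (fun ω => 1 - (1 - Real.exp (-(κ*(s*W ω))))^N) P := by
    apply Integrable.mono' (integrable_const (1:ℝ))
      ((hψc.measurable.comp hWmeas).aestronglyMeasurable)
    refine ae_of_all _ fun ω => ?_
    simp only [Function.comp_apply]
    rw [Real.norm_eq_abs, abs_le]
    exact ⟨by linarith [(hψ01 ω).1], (hψ01 ω).2⟩
  have step5 : ∫⁻ ω, ENNReal.ofReal (1 - (1 - Real.exp (-(κ*(s*W ω))))^N) ∂P
      = ENNReal.ofReal (∫ ω, (1 - (1 - Real.exp (-(κ*(s*W ω))))^N) ∂P) :=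
    (ofReal_integral_eq_lintegral_ofReal hint (ae_of_all _ fun ω => (hψ01 ω).1)).symm
  have hexpint : ∀ n : ℕ, Integrable (fun ω => Real.exp (-((n:ℝ) * κ * s * W ω))) P := by
    intro n
    apply Integrable.mono' (integrable_const (1:ℝ))
    · exact (Real.continuous_exp.measurable.comp
        ((hWmeas.const_mul _).neg)).aestronglyMeasurable
    · refine ae_of_all _ fun ω => ?_
      rw [Real.norm_eq_abs, Real.abs_exp]
      apply Real.exp_le_one_iff.mpr
      have := hWpos ω
      have h0 : 0 ≤ (n:ℝ) * κ * s * W ω := by positivity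
      linarith
  have step6 : ∫ ω, (1 - (1 - Real.exp (-(κ*(s*W ω))))^N) ∂P
      = ∑ n ∈ Finset.Icc 1 N, (N.choose n : ℝ) * (-1 : ℝ) ^ (n + 1) *
          ∫ ω, Real.exp (-((n : ℝ) * κ * s * W ω)) ∂P := by
    have hptw : ∀ ω, 1 - (1 - Real.exp (-(κ*(s*W ω))))^N
        = ∑ n ∈ Finset.Icc 1 N, (N.choose n : ℝ) * (-1 : ℝ) ^ (n + 1) *
            Real.exp (-((n : ℝ) * κ * s * W ω)) := by
      intro ω
      rw [Stmt14Aux.binom N (Real.exp (-(κ*(s*W ω))))]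
      apply Finset.sum_congr rfl
      intro n _
      rw [← Real.exp_nat_mul]
      congr 2
      ring
    rw [integral_congr_ae (ae_of_all _ hptw), integral_finset_sum]
    · apply Finset.sum_congr rfl
      intro n _
      rw [MeasureTheory.integral_const_mul]
    · intro n _
      exact (hexpint n).const_mul _
  rw [step1, step2, ← step6, ← step5, ← step4]
  exact step3
end

section
/- For all real numbers c > 0, λ_e ≥ 0 and τ > 0, the limit as n → +∞ of 4c · exp(−2n ∫₀^τ (1 − exp(−(2c/n) √(τ² − r²))) dr) · (∫₀^τ (τ / √(τ² − r²)) exp(−(2c/n) √(τ² − r²)) dr) · exp(−λ_e π τ²) equals 2cπτ · exp(−(c + λ_e) π τ²). -/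
open Filter Real

section Aux

open MeasureTheory intervalIntegral

private lemma aux_sqrt_integral (τ : ℝ) (hτ : 0 < τ) :
    ∫ r in (0:ℝ)..τ, Real.sqrt (τ^2 - r^2) = π * τ^2 / 4 := by
  have h1 : ∫ x in (0:ℝ)..1, Real.sqrt (1 - x^2) = π / 4 := by
    have heven : ∫ x in (-1:ℝ)..0, Real.sqrt (1 - x^2) = ∫ x in (0:ℝ)..1, Real.sqrt (1 - x^2) := by
      have := intervalIntegral.integral_comp_neg (a := (0:ℝ)) (b := 1) (fun x => Real.sqrt (1 - x^2))
      simp only [neg_zero, neg_neg] at this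
      rw [← this]
      congr 1; ext x; ring_nf
    have hadd : (∫ x in (-1:ℝ)..0, Real.sqrt (1 - x^2)) + ∫ x in (0:ℝ)..1, Real.sqrt (1 - x^2) = π/2 := by
      rw [intervalIntegral.integral_add_adjacent_intervals] <;>
        first
          | exact (Continuous.intervalIntegrable (by fun_prop) _ _)
          | exact integral_sqrt_one_sub_sq
    rw [heven] at hadd; linarith
  have h2 := intervalIntegral.integral_comp_mul_left (a := (0:ℝ)) (b := 1)
      (fun r => Real.sqrt (τ^2 - r^2)) (c := τ) hτ.ne'
  simp only [mul_zero, mul_one, smul_eq_mul] at h2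
  have h3 : ∀ x : ℝ, Real.sqrt (τ^2 - (τ*x)^2) = τ * Real.sqrt (1 - x^2) := by
    intro x
    rw [show τ^2 - (τ*x)^2 = τ^2 * (1 - x^2) by ring, Real.sqrt_mul (sq_nonneg τ),
      Real.sqrt_sq hτ.le]
  simp only [h3] at h2
  rw [intervalIntegral.integral_const_mul, h1] at h2
  have : (∫ r in (0:ℝ)..τ, Real.sqrt (τ^2 - r^2)) = τ * (τ * (π/4)) := by
    field_simp at h2 ⊢; linarith
  rw [this]; ring

private lemma aux_h_integrable (τ : ℝ) (hτ : 0 < τ) :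
    IntervalIntegrable (fun r => τ / Real.sqrt (τ^2 - r^2)) volume 0 τ := by
  have hg : IntervalIntegrable (fun r : ℝ => Real.sqrt τ * (τ - r) ^ (-(1/2) : ℝ)) volume 0 τ := by
    have := ((intervalIntegrable_rpow' (a := 0) (b := τ) (r := (-(1/2):ℝ))
      (by norm_num)).comp_sub_left τ).symm
    simpa using this.const_mul (Real.sqrt τ)
  rw [intervalIntegrable_iff_integrableOn_Ioo_of_le hτ.le] at hg ⊢
  refine hg.mono' ?_ ?_
  · exact (measurable_const.div
      ((continuous_const.sub (continuous_pow 2)).measurable.sqrt)).aestronglyMeasurable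
  · filter_upwards [ae_restrict_mem measurableSet_Ioo] with r hr
    obtain ⟨hr0, hrτ⟩ := hr
    have h1 : (0:ℝ) < τ - r := by linarith
    have h2 : (0:ℝ) < τ ^ 2 - r ^ 2 := by nlinarith
    have hb : Real.sqrt (τ * (τ - r)) ≤ Real.sqrt (τ^2 - r^2) :=
      Real.sqrt_le_sqrt (by nlinarith)
    have hpos : (0:ℝ) < Real.sqrt (τ * (τ - r)) :=
      Real.sqrt_pos.2 (by positivity)
    rw [Real.norm_of_nonneg (by positivity)]
    calc τ / Real.sqrt (τ^2 - r^2) ≤ τ / Real.sqrt (τ * (τ - r)) := by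
          apply div_le_div_of_nonneg_left hτ.le hpos hb
      _ = Real.sqrt τ * (τ - r) ^ (-(1/2) : ℝ) := by
          rw [Real.sqrt_mul hτ.le, Real.rpow_neg h1.le, ← Real.sqrt_eq_rpow]
          rw [div_mul_eq_div_div, Real.div_sqrt, div_eq_mul_inv]

private lemma aux_h_value (τ : ℝ) (hτ : 0 < τ) :
    ∫ r in (0:ℝ)..τ, τ / Real.sqrt (τ^2 - r^2) = τ * (π/2) := by
  have key := intervalIntegral.integral_eq_sub_of_hasDeriv_right_of_le (a := 0) (b := τ)
      (f := fun r => τ * Real.arcsin (r/τ)) (f' := fun r => τ / Real.sqrt (τ^2 - r^2)) hτ.le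
      ((continuous_const.mul (Real.continuous_arcsin.comp (continuous_id.div_const τ))).continuousOn)
      (fun x hx => by
        obtain ⟨hx0, hxτ⟩ := hx
        have h1 : x / τ ≠ -1 := by
          have : 0 ≤ x / τ := div_nonneg hx0.le hτ.le
          intro h; rw [h] at this; linarith
        have h2 : x / τ ≠ 1 := by
          have : x / τ < 1 := (div_lt_one hτ).2 hxτ
          intro h; rw [h] at this; linarith
        have hd : HasDerivAt (fun r => τ * Real.arcsin (r/τ))
            (τ * (1 / Real.sqrt (1 - (x/τ)^2) * (1/τ))) x := by
          simpa using
            ((Real.hasDerivAt_arcsin h1 h2).comp x ((hasDerivAt_id x).div_const τ)).const_mul τ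
        have hpos : (0:ℝ) < τ^2 - x^2 := by nlinarith
        have hs : Real.sqrt (1 - (x/τ)^2) = Real.sqrt (τ^2 - x^2) / τ := by
          rw [show (1:ℝ) - (x/τ)^2 = (τ^2 - x^2)/τ^2 by field_simp,
            Real.sqrt_div hpos.le, Real.sqrt_sq hτ.le]
        have hne : Real.sqrt (τ^2 - x^2) ≠ 0 := (Real.sqrt_pos.2 hpos).ne'
        have heq : τ * (1 / Real.sqrt (1 - (x/τ)^2) * (1/τ)) = τ / Real.sqrt (τ^2 - x^2) := by
          rw [hs]; field_simp
        rw [heq] at hd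
        exact hd.hasDerivWithinAt)
      (aux_h_integrable τ hτ)
  rw [key, div_self hτ.ne', Real.arcsin_one, zero_div, Real.arcsin_zero]
  ring

private lemma aux_B_tendsto (c τ : ℝ) (hc : 0 < c) (hτ : 0 < τ) :
    Tendsto (fun n : ℝ => ∫ r in Set.Ioc (0:ℝ) τ,
        (τ / Real.sqrt (τ^2 - r^2)) * Real.exp (-((2*c/n) * Real.sqrt (τ^2 - r^2))))
      atTop (nhds (∫ r in Set.Ioc (0:ℝ) τ, τ / Real.sqrt (τ^2 - r^2))) := by
  have hint : IntegrableOn (fun r => τ / Real.sqrt (τ^2 - r^2)) (Set.Ioc 0 τ) volume :=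
    (intervalIntegrable_iff_integrableOn_Ioc_of_le hτ.le).1 (aux_h_integrable τ hτ)
  apply MeasureTheory.tendsto_integral_filter_of_dominated_convergence
      (fun r => τ / Real.sqrt (τ^2 - r^2))
  · filter_upwards with n
    have hs : Continuous fun r : ℝ => Real.sqrt (τ^2 - r^2) :=
      Real.continuous_sqrt.comp (continuous_const.sub (continuous_pow 2))
    exact ((measurable_const.div hs.measurable).mul
      ((hs.measurable.const_mul _).neg.exp)).aestronglyMeasurable
  · filter_upwards [eventually_ge_atTop (1:ℝ)] with n hn
    filter_upwards [ae_restrict_mem measurableSet_Ioc] with r _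
    have hdiv : 0 ≤ τ / Real.sqrt (τ^2 - r^2) := by positivity
    have hy : 0 ≤ (2*c/n) * Real.sqrt (τ^2 - r^2) := by positivity
    rw [Real.norm_of_nonneg (by positivity)]
    calc (τ / Real.sqrt (τ^2 - r^2)) * Real.exp (-((2*c/n) * Real.sqrt (τ^2 - r^2)))
        ≤ (τ / Real.sqrt (τ^2 - r^2)) * 1 := by
          apply mul_le_mul_of_nonneg_left _ hdiv
          exact Real.exp_le_one_iff.2 (by linarith)
      _ = τ / Real.sqrt (τ^2 - r^2) := mul_one _
  · exact hint
  · filter_upwards with r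
    have h0 : Tendsto (fun n : ℝ => (2*c/n) * Real.sqrt (τ^2 - r^2)) atTop (nhds 0) := by
      simpa using (tendsto_const_nhds.div_atTop tendsto_id :
        Tendsto (fun n : ℝ => (2*c)/n) atTop (nhds 0)).mul_const (Real.sqrt (τ^2 - r^2))
    have h0' := h0.neg
    rw [neg_zero] at h0'
    have := ((Real.continuous_exp.tendsto 0).comp h0').const_mul (τ / Real.sqrt (τ^2 - r^2))
    simpa using this

private lemma aux_E_tendsto (c τ : ℝ) (hc : 0 < c) (hτ : 0 < τ) :
    Tendsto (fun n : ℝ => ∫ r in Set.Ioc (0:ℝ) τ,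
        2 * n * (1 - Real.exp (-((2*c/n) * Real.sqrt (τ^2 - r^2)))))
      atTop (nhds (∫ r in Set.Ioc (0:ℝ) τ, 4 * c * Real.sqrt (τ^2 - r^2))) := by
  have hs : Continuous fun r : ℝ => Real.sqrt (τ^2 - r^2) :=
    Real.continuous_sqrt.comp (continuous_const.sub (continuous_pow 2))
  apply MeasureTheory.tendsto_integral_filter_of_dominated_convergence (fun _ => 4*c*τ)
  · filter_upwards with n
    exact ((measurable_const.sub (hs.measurable.const_mul _).neg.exp).const_mul
      _).aestronglyMeasurable
  · filter_upwards [eventually_ge_atTop (1:ℝ)] with n hn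
    filter_upwards [ae_restrict_mem measurableSet_Ioc] with r hr
    have hn0 : (0:ℝ) < n := by linarith
    set s := Real.sqrt (τ^2 - r^2) with hsdef
    have hs0 : 0 ≤ s := Real.sqrt_nonneg _
    have hsτ : s ≤ τ := by
      rw [hsdef]
      calc Real.sqrt (τ^2 - r^2) ≤ Real.sqrt (τ^2) := Real.sqrt_le_sqrt (by nlinarith [hr.1])
        _ = τ := Real.sqrt_sq hτ.le
    have hy : 0 ≤ (2*c/n) * s := by positivity
    have hexp1 : Real.exp (-((2*c/n)*s)) ≤ 1 := Real.exp_le_one_iff.2 (by linarith)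
    have hexp2 : 1 - (2*c/n)*s ≤ Real.exp (-((2*c/n)*s)) := by
      have := Real.add_one_le_exp (-((2*c/n)*s)); linarith
    rw [Real.norm_of_nonneg (by nlinarith)]
    have : 2 * n * (1 - Real.exp (-((2*c/n)*s))) ≤ 2 * n * ((2*c/n)*s) := by
      apply mul_le_mul_of_nonneg_left (by linarith) (by linarith)
    calc 2 * n * (1 - Real.exp (-((2*c/n)*s))) ≤ 2 * n * ((2*c/n)*s) := this
      _ = 4 * c * s := by field_simp; ring
      _ ≤ 4 * c * τ := by nlinarith
  · exact integrableOn_const (by simp [Real.volume_Ioc])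
  · filter_upwards with r
    set s := Real.sqrt (τ^2 - r^2) with hsdef
    set a := 2*c*s with hadef
    have hd : HasDerivAt (fun t : ℝ => Real.exp (-(a*t))) (-a) 0 := by
      simpa using (((hasDerivAt_id (0:ℝ)).const_mul a).neg).exp
    have hslope := hasDerivAt_iff_tendsto_slope.mp hd
    have hinv : Tendsto (fun n : ℝ => n⁻¹) atTop (nhdsWithin 0 {(0:ℝ)}ᶜ) := by
      apply tendsto_nhdsWithin_of_tendsto_nhds_of_eventually_within _ tendsto_inv_atTop_zero
      filter_upwards [eventually_ge_atTop (1:ℝ)] with n hn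
      simp only [Set.mem_compl_iff, Set.mem_singleton_iff]
      positivity
    have hcomp := (hslope.comp hinv).const_mul (-2 : ℝ)
    have heq : ∀ n : ℝ, -2 * ((slope (fun t : ℝ => Real.exp (-(a*t))) 0) ∘ (fun n : ℝ => n⁻¹)) n
        = 2 * n * (1 - Real.exp (-((2*c/n) * s))) := by
      intro n
      have harg : a * n⁻¹ = (2*c/n) * s := by
        rw [hadef, div_eq_mul_inv]; ring
      simp only [Function.comp_apply, slope_def_field, div_eq_mul_inv, sub_zero, inv_inv,
        mul_zero, neg_zero, Real.exp_zero, harg]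
      ring
    have hval : -2 * -a = 4 * c * s := by rw [hadef]; ring
    rw [hval] at hcomp
    exact hcomp.congr heq

end Aux

/-- Equation (29) of Lemma 4: with line intensity `n` and vehicular eavesdropper
intensity `c/n`, the pdf of the minimum eavesdropper distance (nearest eavesdropper
a vehicular node) converges to the nearest-point pdf `2 c π τ exp (-(c+λₑ) π τ²)`
of a 2D PPP of intensity `c + λₑ`. -/
theorem stmt_16 (c lam_e τ : ℝ) (hc : 0 < c) (hlam : 0 ≤ lam_e) (hτ : 0 < τ) :
    Tendsto
      (fun n : ℝ =>
        4 * c *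
          Real.exp (-(2 * n * ∫ r in (0 : ℝ)..τ,
            (1 - Real.exp (-((2 * c / n) * Real.sqrt (τ ^ 2 - r ^ 2)))))) *
          (∫ r in (0 : ℝ)..τ,
            (τ / Real.sqrt (τ ^ 2 - r ^ 2)) *
              Real.exp (-((2 * c / n) * Real.sqrt (τ ^ 2 - r ^ 2)))) *
          Real.exp (-(lam_e * π * τ ^ 2)))
      atTop (nhds (2 * c * π * τ * Real.exp (-((c + lam_e) * π * τ ^ 2)))) := by
  -- limit of the exponent term
  have hE : Tendsto (fun n : ℝ => 2 * n * ∫ r in (0:ℝ)..τ,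
      (1 - Real.exp (-((2 * c / n) * Real.sqrt (τ ^ 2 - r ^ 2)))))
      atTop (nhds (c * π * τ ^ 2)) := by
    have h1 := aux_E_tendsto c τ hc hτ
    have hval : (∫ r in Set.Ioc (0:ℝ) τ, 4 * c * Real.sqrt (τ^2 - r^2)) = c * π * τ ^ 2 := by
      rw [← intervalIntegral.integral_of_le hτ.le, intervalIntegral.integral_const_mul,
        aux_sqrt_integral τ hτ]
      ring
    rw [hval] at h1
    apply h1.congr
    intro n
    rw [← intervalIntegral.integral_const_mul, intervalIntegral.integral_of_le hτ.le]
  -- limit of the remaining integral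
  have hB : Tendsto (fun n : ℝ => ∫ r in (0:ℝ)..τ,
      (τ / Real.sqrt (τ ^ 2 - r ^ 2)) * Real.exp (-((2 * c / n) * Real.sqrt (τ ^ 2 - r ^ 2))))
      atTop (nhds (τ * (π/2))) := by
    have h1 := aux_B_tendsto c τ hc hτ
    have hval : (∫ r in Set.Ioc (0:ℝ) τ, τ / Real.sqrt (τ^2 - r^2)) = τ * (π/2) := by
      rw [← intervalIntegral.integral_of_le hτ.le, aux_h_value τ hτ]
    rw [hval] at h1
    apply h1.congr
    intro n
    rw [intervalIntegral.integral_of_le hτ.le]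
  have hE' : Tendsto (fun n : ℝ => Real.exp (-(2 * n * ∫ r in (0:ℝ)..τ,
      (1 - Real.exp (-((2 * c / n) * Real.sqrt (τ ^ 2 - r ^ 2)))))))
      atTop (nhds (Real.exp (-(c * π * τ ^ 2)))) := by
    have := (Real.continuous_exp.tendsto _).comp hE.neg
    exact this
  have total := ((tendsto_const_nhds (x := 4*c) (f := atTop)).mul hE').mul hB |>.mul
    (tendsto_const_nhds (x := Real.exp (-(lam_e * π * τ ^ 2))))
  have hfinal : 4 * c * Real.exp (-(c * π * τ ^ 2)) * (τ * (π/2)) *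
      Real.exp (-(lam_e * π * τ ^ 2)) = 2 * c * π * τ * Real.exp (-((c + lam_e) * π * τ ^ 2)) := by
    rw [show -((c + lam_e) * π * τ ^ 2) = -(c * π * τ ^ 2) + -(lam_e * π * τ ^ 2) by ring,
      Real.exp_add]
    ring
  rw [← hfinal]
  exact total
end
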